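/- arXiv:1011.4228 — 3 statements merged into one kernel-verified Lean document; each statement's English description precedes it below -/
import Mathlib

section
/- Let S be a positively graded polynomial ring over a field and let M be a graded submodule of S^{1×r} of rank r (as a module over the domain S). Then M is a free S-module if and only if some (equivalently, any) minimal homogeneous generating set of M has exactly r elements. -/
open MvPolynomial


lemma hc_mul {σ R : Type*} [CommRing R] (f g : MvPolynomial σ R) (e d : ℕ)
    (hg : g ∈ homogeneousSubmodule σ R e) :
    homogeneousComponent d (f * g) =
      if e ≤ d then homogeneousComponent (d - e) f * g else 0 := by
  have key : ∀ v : σ →₀ ℕ, ∀ c : R,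
      homogeneousComponent d ((monomial v c : MvPolynomial σ R) * g) =
      if e ≤ d then homogeneousComponent (d - e) (monomial v c : MvPolynomial σ R) * g
      else 0 := by
    intro v c
    have hm : (monomial v c : MvPolynomial σ R) ∈ homogeneousSubmodule σ R v.degree :=
      (mem_homogeneousSubmodule _ _).2 (isHomogeneous_monomial _ rfl)
    have hmul : (monomial v c : MvPolynomial σ R) * g ∈ homogeneousSubmodule σ R (v.degree + e) :=
      (mem_homogeneousSubmodule _ _).2
        (((mem_homogeneousSubmodule _ _).1 hm).mul ((mem_homogeneousSubmodule _ _).1 hg))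
    rw [homogeneousComponent_of_mem hmul, homogeneousComponent_of_mem hm]
    by_cases hle : e ≤ d
    · rw [if_pos hle]
      by_cases hd : d = v.degree + e
      · rw [if_pos hd, if_pos (by omega)]
      · rw [if_neg hd, if_neg (by omega), zero_mul]
    · rw [if_neg hle, if_neg (by omega)]
  conv_lhs => rw [f.as_sum, Finset.sum_mul, map_sum]
  rw [Finset.sum_congr rfl fun v hv => key v _]
  by_cases hle : e ≤ d
  · simp only [if_pos hle]
    conv_rhs => rw [f.as_sum, map_sum, Finset.sum_mul]
  · simp [if_neg hle]

lemma relation_cc {k : Type} [Field k] {r : ℕ}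
    [DecidableEq (Fin r → MvPolynomial (Fin r) k)]
    (s : Finset (Fin r → MvPolynomial (Fin r) k))
    (hs : ∀ v ∈ s, ∃ d, ∀ j, v j ∈ homogeneousSubmodule (Fin r) k d)
    (hnospan : ∀ v ∈ s, v ∉ Submodule.span (MvPolynomial (Fin r) k)
      ((s.erase v : Finset _) : Set (Fin r → MvPolynomial (Fin r) k)))
    (f : (Fin r → MvPolynomial (Fin r) k) → MvPolynomial (Fin r) k)
    (hrel : ∑ v ∈ s, f v • v = 0) :
    ∀ w ∈ s, constantCoeff (f w) = 0 := by
  classical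
  intro w hw
  by_contra hc
  -- degree function
  let D : (Fin r → MvPolynomial (Fin r) k) → ℕ := fun v =>
    if h : ∃ d, ∀ j, v j ∈ homogeneousSubmodule (Fin r) k d then h.choose else 0
  have hD : ∀ v ∈ s, ∀ j, v j ∈ homogeneousSubmodule (Fin r) k (D v) := by
    intro v hv j
    have h := hs v hv
    simp only [D, dif_pos h]
    exact h.choose_spec j
  set dw := D w with hdw
  have h1 : ∀ j, ∑ v ∈ s, f v * v j = 0 := by
    intro j
    have := congrFun hrel j
    simpa [Finset.sum_apply] using this
  let g : (Fin r → MvPolynomial (Fin r) k) → MvPolynomial (Fin r) k := fun v => if D v ≤ dw then homogeneousComponent (dw - D v) (f v) else 0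
  have hrel2 : ∑ v ∈ s, g v • v = 0 := by
    funext j
    have h2 := congrArg (homogeneousComponent dw) (h1 j)
    rw [map_sum, map_zero] at h2
    have h3 : ∑ v ∈ s, g v * v j = 0 := by
      rw [← h2]
      refine Finset.sum_congr rfl fun v hv => ?_
      rw [hc_mul (f v) (v j) (D v) dw (hD v hv j)]
      simp only [g, ite_mul, zero_mul]
    simpa [Finset.sum_apply] using h3
  have hgw : g w = C (constantCoeff (f w)) := by
    simp only [g, ← hdw, le_refl, if_true, Nat.sub_self, homogeneousComponent_zero]
    rfl
  have hsum : g w • w + ∑ v ∈ s.erase w, g v • v = 0 := by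
    have := Finset.add_sum_erase s (fun v => g v • v) hw
    rw [hrel2] at this; exact this
  have hmem : ∑ v ∈ s.erase w, g v • v ∈
      Submodule.span (MvPolynomial (Fin r) k) ((s.erase w : Finset _) : Set (Fin r → MvPolynomial (Fin r) k)) :=
    Submodule.sum_mem _ fun v hv => Submodule.smul_mem _ _ (Submodule.subset_span hv)
  have hweq : w = (C (constantCoeff (f w))⁻¹ : MvPolynomial (Fin r) k) • (- ∑ v ∈ s.erase w, g v • v) := by
    have : g w • w = - ∑ v ∈ s.erase w, g v • v := eq_neg_of_add_eq_zero_left hsum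
    rw [← this, hgw, smul_smul, ← C_mul, inv_mul_cancel₀ hc, C_1, one_smul]
  refine hnospan w hw ?_
  nth_rewrite 2 [hweq]
  exact Submodule.smul_mem _ _ (Submodule.neg_mem _ hmem)

lemma free_of_card_span {k : Type} [Field k] {r : ℕ}
    (M : Submodule (MvPolynomial (Fin r) k) (Fin r → MvPolynomial (Fin r) k))
    (hrank : Module.rank (MvPolynomial (Fin r) k) M = r)
    (s : Finset (Fin r → MvPolynomial (Fin r) k))
    (hspan : Submodule.span (MvPolynomial (Fin r) k)
      (s : Set (Fin r → MvPolynomial (Fin r) k)) = M)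
    (hcard : s.card = r) :
    Module.Free (MvPolynomial (Fin r) k) M := by
  classical
  let v : Fin r → (Fin r → MvPolynomial (Fin r) k) :=
    fun i => (s.equivFin.symm (finCongr hcard.symm i) : _)
  have hrange : Set.range v = (s : Set (Fin r → MvPolynomial (Fin r) k)) := by
    have h1 : Function.Surjective (fun i : Fin r => s.equivFin.symm (finCongr hcard.symm i)) :=
      s.equivFin.symm.surjective.comp (finCongr hcard.symm).surjective
    rw [show v = (Subtype.val ∘ fun i : Fin r => s.equivFin.symm (finCongr hcard.symm i))
      from rfl, Set.range_comp, h1.range_eq, Set.image_univ, Subtype.range_coe]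
  let A : Matrix (Fin r) (Fin r) (MvPolynomial (Fin r) k) := Matrix.of v
  by_cases hdet : A.det = 0
  · exfalso
    have hr0 : r ≠ 0 := by
      rintro rfl
      have : A.det = 1 := Matrix.det_fin_zero
      rw [hdet] at this; exact one_ne_zero this.symm
    obtain ⟨m, hm⟩ := Nat.exists_eq_succ_of_ne_zero hr0
    have hle : Module.rank (MvPolynomial (Fin r) k) M ≤ (m : Cardinal) := by
      apply rank_le
      intro t ht
      by_contra htc
      push_neg at htc
      obtain ⟨t', ht's, ht'c⟩ := Finset.exists_subset_card_eq (s := t) (n := r) (by omega)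
      have ht' : LinearIndependent (MvPolynomial (Fin r) k)
          (fun x : {x // x ∈ t'} => (x : M)) := (show LinearIndepOn (MvPolynomial (Fin r) k) id (t : Set M) from ht).mono (Finset.coe_subset.mpr ht's)
      let w : Fin r → M := fun i => (t'.equivFin.symm (finCongr ht'c.symm i) : M)
      have hw : LinearIndependent (MvPolynomial (Fin r) k) w :=
        ht'.comp (fun i => t'.equivFin.symm (finCongr ht'c.symm i))
          (t'.equivFin.symm.injective.comp (finCongr ht'c.symm).injective)
      have hu : LinearIndependent (MvPolynomial (Fin r) k)
          (fun i => (w i : Fin r → MvPolynomial (Fin r) k)) :=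
        hw.map' M.subtype M.ker_subtype
      have hex : ∀ i : Fin r, ∃ c : Fin r → MvPolynomial (Fin r) k,
          ∑ j, c j • v j = (w i : Fin r → MvPolynomial (Fin r) k) := by
        intro i
        rw [← Submodule.mem_span_range_iff_exists_fun, hrange, hspan]
        exact (w i).2
      choose C hC using hex
      let Cm : Matrix (Fin r) (Fin r) (MvPolynomial (Fin r) k) := Matrix.of C
      have hrow : ∀ i, (Cm * A) i = (w i : Fin r → MvPolynomial (Fin r) k) := by
        intro i
        funext j'
        have := congrFun (hC i) j'
        simpa [Matrix.mul_apply, Finset.sum_apply, Cm, A, Matrix.of_apply] using this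
      have hdet2 : (Cm * A).det = 0 := by rw [Matrix.det_mul, hdet, mul_zero]
      obtain ⟨z, hz0, hz⟩ := Matrix.exists_vecMul_eq_zero_iff.mpr hdet2
      have hzsum : ∑ i, z i • (fun i => (w i : Fin r → MvPolynomial (Fin r) k)) i = 0 := by
        funext j'
        have h2 := congrFun hz j'
        simp only [Matrix.vecMul, dotProduct, Pi.zero_apply] at h2
        simp only [Finset.sum_apply, Pi.smul_apply, smul_eq_mul, Pi.zero_apply]
        rw [← h2]
        exact Finset.sum_congr rfl fun i _ => by rw [← hrow i]
      have := Fintype.linearIndependent_iff.mp hu z hzsum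
      exact hz0 (funext this)
    rw [hrank] at hle
    have : r ≤ m := by exact_mod_cast hle
    omega
  · have hker : ∀ c : Fin r → MvPolynomial (Fin r) k, Matrix.vecMul c A = 0 → c = 0 := by
      intro c hc
      by_contra hc0
      exact hdet (Matrix.exists_vecMul_eq_zero_iff.mp ⟨c, hc0, hc⟩)
    have hinj : Function.Injective A.vecMulLinear := by
      rw [← LinearMap.ker_eq_bot]
      exact LinearMap.ker_eq_bot'.mpr hker
    have hrangeφ : LinearMap.range A.vecMulLinear = M := by
      rw [range_vecMulLinear]
      rw [show Set.range A.row = Set.range v from rfl, hrange, hspan]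
    exact Module.Free.of_equiv
      ((LinearEquiv.ofInjective A.vecMulLinear hinj).trans (LinearEquiv.ofEq _ _ hrangeφ))

lemma exists_homog_finset {k : Type} [Field k] {r : ℕ}
    (M : Submodule (MvPolynomial (Fin r) k) (Fin r → MvPolynomial (Fin r) k))
    (hgr : M = Submodule.span (MvPolynomial (Fin r) k)
      {v | v ∈ M ∧ ∃ d, ∀ j, v j ∈ homogeneousSubmodule (Fin r) k d}) :
    ∃ t : Finset (Fin r → MvPolynomial (Fin r) k),
      (∀ v ∈ t, ∃ d, ∀ j, v j ∈ homogeneousSubmodule (Fin r) k d) ∧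
      Submodule.span (MvPolynomial (Fin r) k) (t : Set (Fin r → MvPolynomial (Fin r) k)) = M := by
  classical
  have hfg : M.FG := IsNoetherian.noetherian M
  obtain ⟨G, hG⟩ := hfg
  have hmem : ∀ g ∈ G, ∃ T : Finset (Fin r → MvPolynomial (Fin r) k),
      (T : Set (Fin r → MvPolynomial (Fin r) k)) ⊆
        {v | v ∈ M ∧ ∃ d, ∀ j, v j ∈ homogeneousSubmodule (Fin r) k d} ∧
      g ∈ Submodule.span (MvPolynomial (Fin r) k) (T : Set (Fin r → MvPolynomial (Fin r) k)) := by
    intro g hg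
    have : g ∈ M := hG ▸ Submodule.subset_span hg
    rw [hgr] at this
    exact Submodule.mem_span_finite_of_mem_span this
  choose! T hT1 hT2 using hmem
  refine ⟨G.biUnion T, ?_, ?_⟩
  · intro v hv
    obtain ⟨g, hg, hvg⟩ := Finset.mem_biUnion.mp hv
    exact (hT1 g hg hvg).2
  · apply le_antisymm
    · rw [Submodule.span_le]
      intro v hv
      obtain ⟨g, hg, hvg⟩ := Finset.mem_biUnion.mp hv
      exact (hT1 g hg hvg).1
    · rw [← hG, Submodule.span_le]
      intro g hg
      exact Submodule.span_mono (by
        intro x hx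
        exact Finset.mem_coe.mpr (Finset.mem_biUnion.mpr ⟨g, hg, Finset.mem_coe.mp hx⟩))
        (hT2 g hg)

lemma card_lower_bound {k : Type} [Field k] {r : ℕ}
    (M : Submodule (MvPolynomial (Fin r) k) (Fin r → MvPolynomial (Fin r) k))
    (hrank : Module.rank (MvPolynomial (Fin r) k) M = r)
    (t : Finset (Fin r → MvPolynomial (Fin r) k))
    (hspan : Submodule.span (MvPolynomial (Fin r) k)
      (t : Set (Fin r → MvPolynomial (Fin r) k)) = M) :
    r ≤ t.card := by
  have h1 := rank_span_finset_le (R := MvPolynomial (Fin r) k) t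
  rw [hspan, hrank] at h1
  exact_mod_cast h1

lemma forward_dir {k : Type} [Field k] {r : ℕ}
    (M : Submodule (MvPolynomial (Fin r) k) (Fin r → MvPolynomial (Fin r) k))
    (hgr : M = Submodule.span (MvPolynomial (Fin r) k)
      {v | v ∈ M ∧ ∃ d, ∀ j, v j ∈ homogeneousSubmodule (Fin r) k d})
    (hrank : Module.rank (MvPolynomial (Fin r) k) M = r)
    (hfree : Module.Free (MvPolynomial (Fin r) k) M) :
    ∃ s : Finset (Fin r → MvPolynomial (Fin r) k),
      (∀ v ∈ s, ∃ d, ∀ j, v j ∈ homogeneousSubmodule (Fin r) k d) ∧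
      Submodule.span (MvPolynomial (Fin r) k) (s : Set (Fin r → MvPolynomial (Fin r) k)) = M ∧
      s.card = r := by
  classical
  haveI := hfree
  obtain ⟨t0, ht0hom, ht0span⟩ := exists_homog_finset M hgr
  let P : ℕ → Prop := fun n => ∃ t : Finset (Fin r → MvPolynomial (Fin r) k),
    (∀ v ∈ t, ∃ d, ∀ j, v j ∈ homogeneousSubmodule (Fin r) k d) ∧
    Submodule.span (MvPolynomial (Fin r) k) (t : Set (Fin r → MvPolynomial (Fin r) k)) = M ∧
    t.card = n
  have hP : ∃ n, P n := ⟨t0.card, t0, ht0hom, ht0span, rfl⟩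
  obtain ⟨s₀, hs₀hom, hs₀span, hs₀card⟩ := Nat.find_spec hP
  -- minimality: no element lies in the span of the rest
  have hnospan : ∀ v ∈ s₀, v ∉ Submodule.span (MvPolynomial (Fin r) k)
      ((s₀.erase v : Finset _) : Set (Fin r → MvPolynomial (Fin r) k)) := by
    intro v hv hvmem
    have hspan' : Submodule.span (MvPolynomial (Fin r) k)
        ((s₀.erase v : Finset _) : Set (Fin r → MvPolynomial (Fin r) k)) = M := by
      rw [← hs₀span]
      conv_rhs => rw [← Finset.insert_erase hv]
      rw [Finset.coe_insert, Submodule.span_insert_eq_span hvmem]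
    have hPm : P (s₀.card - 1) :=
      ⟨s₀.erase v, fun w hw => hs₀hom w (Finset.mem_of_mem_erase hw), hspan',
        Finset.card_erase_of_mem hv⟩
    have h1 : Nat.find hP ≤ s₀.card - 1 := Nat.find_le hPm
    have h2 : 1 ≤ s₀.card := Finset.card_pos.mpr ⟨v, hv⟩
    omega
  -- lower bound
  have hlow : r ≤ s₀.card := card_lower_bound M hrank s₀ hs₀span
  -- basis of M indexed by Fin r
  have hmk : Cardinal.mk (Module.Free.ChooseBasisIndex (MvPolynomial (Fin r) k) M) = r := by
    rw [← Module.Free.rank_eq_card_chooseBasisIndex, hrank]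
  obtain ⟨eι⟩ := Cardinal.mk_eq_nat_iff.mp hmk
  let b : Module.Basis (Fin r) (MvPolynomial (Fin r) k) M :=
    (Module.Free.chooseBasis (MvPolynomial (Fin r) k) M).reindex eι
  -- coefficients A : basis in terms of generators
  have hsub : ∀ v ∈ s₀, v ∈ M := fun v hv => hs₀span ▸ Submodule.subset_span hv
  have hAex : ∀ i : Fin r, ∃ a : (Fin r → MvPolynomial (Fin r) k) → MvPolynomial (Fin r) k,
      ∑ v ∈ s₀, a v • v = (b i : Fin r → MvPolynomial (Fin r) k) := by
    intro i
    refine (Exists.imp fun a ha => ha.2) (Submodule.mem_span_finset.mp ?_)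
    rw [hs₀span]
    exact (b i).2
  choose A hA using hAex
  -- coefficients B : generators in terms of basis
  let B : (Fin r → MvPolynomial (Fin r) k) → Fin r → MvPolynomial (Fin r) k :=
    fun w i => if h : w ∈ M then b.repr ⟨w, h⟩ i else 0
  have hB : ∀ w (hw : w ∈ s₀), (∑ i, B w i • b i : M) = ⟨w, hsub w hw⟩ := by
    intro w hw
    have := b.sum_repr ⟨w, hsub w hw⟩
    rw [← this]
    refine Finset.sum_congr rfl fun i _ => ?_
    simp only [B, dif_pos (hsub w hw)]
  -- relation and constant coefficients
  have hcc : ∀ w ∈ s₀, ∀ v ∈ s₀,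
      (if v = w then (1:k) else 0) = ∑ i, constantCoeff (B w i) * constantCoeff (A i v) := by
    intro w hw v hv
    let f : (Fin r → MvPolynomial (Fin r) k) → MvPolynomial (Fin r) k :=
      fun u => (if u = w then 1 else 0) - ∑ i, B w i * A i u
    have hrel : ∑ u ∈ s₀, f u • u = 0 := by
      simp only [f, sub_smul, Finset.sum_sub_distrib]
      have e1 : ∑ u ∈ s₀, (if u = w then (1 : MvPolynomial (Fin r) k) else 0) • u = w := by
        simp only [ite_smul, one_smul, zero_smul]
        rw [Finset.sum_ite_eq' s₀ w (fun u => u), if_pos hw]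
      have e2 : ∑ u ∈ s₀, (∑ i, B w i * A i u) • u = w := by
        rw [Finset.sum_congr rfl (fun u _ => Finset.sum_smul)]
        rw [Finset.sum_comm]
        have : ∀ i : Fin r, ∑ u ∈ s₀, (B w i * A i u) • u
            = B w i • (b i : Fin r → MvPolynomial (Fin r) k) := by
          intro i
          rw [← hA i, Finset.smul_sum]
          exact Finset.sum_congr rfl fun u _ => by rw [mul_smul]
        rw [Finset.sum_congr rfl fun i _ => this i]
        have := congrArg (Submodule.subtype M) (hB w hw)
        simpa using this
      rw [e1, e2, sub_self]
    have := relation_cc s₀ hs₀hom hnospan f hrel v hv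
    have hccf : constantCoeff (f v) = 0 := this
    simp only [f, map_sub, map_sum, map_mul] at hccf
    rw [sub_eq_zero] at hccf
    rw [← hccf]
    split_ifs with h
    · simp
    · simp
  -- matrices over k
  let σt := {x // x ∈ s₀}
  let B₀ : Matrix σt (Fin r) k := fun w i => constantCoeff (B w.val i)
  let A₀ : Matrix (Fin r) σt k := fun i v => constantCoeff (A i v.val)
  have hBA : B₀ * A₀ = 1 := by
    ext w v
    rw [Matrix.mul_apply, Matrix.one_apply]
    have := (hcc w.val w.2 v.val v.2).symm
    rw [this]
    by_cases h : v.val = w.val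
    · rw [if_pos h, if_pos (Subtype.ext h.symm)]
    · rw [if_neg h, if_neg (fun hh => h (congrArg Subtype.val hh.symm))]
  have hup : s₀.card ≤ r := by
    have h1 : (1 : Matrix σt σt k).rank = Fintype.card σt := Matrix.rank_one
    have h2 : (B₀ * A₀).rank ≤ B₀.rank := Matrix.rank_mul_le_left B₀ A₀
    have h3 : B₀.rank ≤ Fintype.card (Fin r) := Matrix.rank_le_card_width B₀
    have h4 : Fintype.card σt = s₀.card := Fintype.card_coe s₀
    rw [hBA, h1, h4] at h2
    rw [Fintype.card_fin] at h3
    omega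
  exact ⟨s₀, hs₀hom, hs₀span, le_antisymm hup hlow⟩

/-- Let `S = k[x₁,…,x_r]` (standard grading) and let `M` be a graded
submodule of `S^{1×r}` of rank `r`.  Then `M` is free iff some minimal homogeneous
generating set of `M` has exactly `r` elements. -/
theorem graded_submodule_free_iff_minimal_generators_card
    (k : Type) [Field k] (r : ℕ)
    (M : Submodule (MvPolynomial (Fin r) k) (Fin r → MvPolynomial (Fin r) k))
    (hgr : M = Submodule.span (MvPolynomial (Fin r) k)
      {v | v ∈ M ∧ ∃ d, ∀ j, v j ∈ homogeneousSubmodule (Fin r) k d})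
    (hrank : Module.rank (MvPolynomial (Fin r) k) M = r) :
    Module.Free (MvPolynomial (Fin r) k) M ↔
      ∃ s : Finset (Fin r → MvPolynomial (Fin r) k),
        (∀ v ∈ s, ∃ d, ∀ j, v j ∈ homogeneousSubmodule (Fin r) k d) ∧
        Submodule.span (MvPolynomial (Fin r) k) (s : Set (Fin r → MvPolynomial (Fin r) k)) = M ∧
        (∀ u ⊆ s, Submodule.span (MvPolynomial (Fin r) k)
          (u : Set (Fin r → MvPolynomial (Fin r) k)) = M → u = s) ∧
        s.card = r := by
  classical
  constructor
  · intro hfree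
    obtain ⟨s, hhom, hspan, hcard⟩ := forward_dir M hgr hrank hfree
    refine ⟨s, hhom, hspan, ?_, hcard⟩
    intro u hu hspanu
    refine Finset.eq_of_subset_of_card_le hu ?_
    have := card_lower_bound M hrank u hspanu
    omega
  · rintro ⟨s, hhom, hspan, hmin, hcard⟩
    exact free_of_card_span M hrank s hspan hcard
end

section
/- The reflection arrangement of type D_r (defining polynomial ∏_{1≤i<j≤r}(x_i−x_j)(x_i+x_j)) is free with exponents {1, 3, 5, …, 2r−3, r−1}. -/
open MvPolynomial

/-- the degree-1 polynomial `∑ v j · x_j ∈ ℝ[x₁,…,x_n]` attached to a covector `v`. -/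
noncomputable def linpoly (n : ℕ) (v : Fin n → ℝ) : MvPolynomial (Fin n) ℝ :=
  ∑ j, C (v j) * X j

/-- The central arrangement in `ℝ^n` with defining polynomial `Q` is free with
exponents `e`: the module `D(A) = {θ : θ(Q) ∈ Q·S}` of `A`-derivations over
`S = ℝ[x₁,…,x_n]` has a free homogeneous basis `θ₁,…,θ_n` whose polynomial degrees
form the multiset `e`. -/
def FreeWithExp (n : ℕ) (Q : MvPolynomial (Fin n) ℝ) (e : Multiset ℕ) : Prop :=
  ∃ (θ : Fin n → Derivation ℝ (MvPolynomial (Fin n) ℝ) (MvPolynomial (Fin n) ℝ))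
    (d : Fin n → ℕ),
    Finset.univ.val.map d = e ∧
    (∀ k, θ k Q ∈ Ideal.span {Q}) ∧
    (∀ k j, θ k (X j) ∈ homogeneousSubmodule (Fin n) ℝ (d k)) ∧
    LinearIndependent (MvPolynomial (Fin n) ℝ) θ ∧
    (∀ η : Derivation ℝ (MvPolynomial (Fin n) ℝ) (MvPolynomial (Fin n) ℝ),
      η Q ∈ Ideal.span {Q} →
        η ∈ Submodule.span (MvPolynomial (Fin n) ℝ) (Set.range θ))




namespace DrAux

/-- Any linear form `X i - c • X j` with `i ≠ j` is prime. -/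
lemma prime_lin {n : ℕ} {i j : Fin (n+1)} (hij : i ≠ j) (c : ℝ) :
    Prime (X i - C c * X j : MvPolynomial (Fin (n+1)) ℝ) := by
  classical
  set σ : Equiv.Perm (Fin (n+1)) := Equiv.swap 0 i with hσ
  have hσi : σ i = 0 := Equiv.swap_apply_right _ _
  have hσj : σ j ≠ 0 := fun h => hij (σ.injective (hσi.trans h.symm))
  obtain ⟨m, hm⟩ := Fin.exists_succ_eq_of_ne_zero hσj
  let e := (renameEquiv ℝ σ).trans (finSuccEquiv ℝ n)
  have hC : e (C c) = Polynomial.C (MvPolynomial.C c) := by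
    simp [e, renameEquiv_apply, rename_C, finSuccEquiv_apply, eval₂Hom_C]
  have he : e (X i - C c * X j) = Polynomial.X - Polynomial.C (C c * X m) := by
    rw [map_sub, map_mul, hC]
    have h1 : e (X i) = Polynomial.X := by
      simp [e, renameEquiv_apply, rename_X, hσi, finSuccEquiv_X_zero]
    have h2 : e (X j) = Polynomial.C (X m) := by
      have : σ j = Fin.succ m := hm.symm
      simp [e, renameEquiv_apply, rename_X, this, finSuccEquiv_X_succ]
    rw [h1, h2, ← map_mul]
  have hp : Prime (e (X i - C c * X j)) := by
    rw [he]; exact Polynomial.prime_X_sub_C _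
  exact (MulEquiv.prime_iff e.toMulEquiv).mp hp

lemma prime_sub {n : ℕ} {i j : Fin (n+1)} (hij : i ≠ j) :
    Prime (X i - X j : MvPolynomial (Fin (n+1)) ℝ) := by
  simpa using prime_lin hij 1

lemma prime_add {n : ℕ} {i j : Fin (n+1)} (hij : i ≠ j) :
    Prime (X i + X j : MvPolynomial (Fin (n+1)) ℝ) := by
  have := prime_lin hij (-1)
  simpa [sub_neg_eq_add, map_neg] using this

lemma not_dvd_of_eval {n : ℕ} {f g : MvPolynomial (Fin n) ℝ} (x : Fin n → ℝ)
    (hf : eval x f = 0) (hg : eval x g ≠ 0) : ¬ f ∣ g := by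
  rintro ⟨h, rfl⟩
  exact hg (by rw [map_mul, hf, zero_mul])

/-- product of pairwise non-dividing primes dividing `a` divides `a`. -/
lemma prod_primes_dvd {α M : Type*} [CommMonoidWithZero M] [IsCancelMulZero M] [DecidableEq α]
    (s : Finset α) (f : α → M) (hp : ∀ p ∈ s, Prime (f p))
    (hnd : ∀ p ∈ s, ∀ q ∈ s, p ≠ q → ¬ f p ∣ f q) {a : M}
    (h : ∀ p ∈ s, f p ∣ a) : (∏ p ∈ s, f p) ∣ a := by
  classical
  induction s using Finset.induction_on with
  | empty => simpa using one_dvd a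
  | insert _ _ hns ih =>
    rename_i p₀ s'
    rw [Finset.prod_insert hns]
    obtain ⟨b, hb⟩ := ih (fun p hp' => hp p (Finset.mem_insert_of_mem hp'))
      (fun p hp' q hq' => hnd p (Finset.mem_insert_of_mem hp') q (Finset.mem_insert_of_mem hq'))
      (fun p hp' => h p (Finset.mem_insert_of_mem hp'))
    have hp₀ : Prime (f p₀) := hp p₀ (Finset.mem_insert_self _ _)
    have hd : f p₀ ∣ (∏ q ∈ s', f q) * b := hb ▸ h p₀ (Finset.mem_insert_self _ _)
    rcases hp₀.dvd_or_dvd hd with hca | hcb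
    · exfalso
      obtain ⟨q, hq, hdq⟩ := (hp₀.dvd_finset_prod_iff _).mp hca
      exact hnd p₀ (Finset.mem_insert_self _ _) q (Finset.mem_insert_of_mem hq)
        (fun h' => hns (h' ▸ hq)) hdq
    · obtain ⟨c, hc⟩ := hcb
      exact ⟨c, by rw [hb, hc, mul_left_comm, mul_assoc]⟩

end DrAux
namespace DrAux

variable {r : ℕ}
local notation "SS" => MvPolynomial (Fin r) ℝ

lemma derivation_sum_apply {ι : Type*} (s : Finset ι)
    (D : ι → Derivation ℝ (MvPolynomial (Fin r) ℝ) (MvPolynomial (Fin r) ℝ)) (a : SS) :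
    (∑ k ∈ s, D k) a = ∑ k ∈ s, D k a := by
  classical
  induction s using Finset.induction_on with
  | empty => simp
  | insert _ _ h ih => rename_i i s'; simp [Finset.sum_insert h, ih]

/-- Leibniz for a finite product, divisibility form. -/
lemma dvd_derivation_of_dvd {ι : Type*} [DecidableEq ι] (s : Finset ι) (g : ι → SS)
    (D : Derivation ℝ SS SS) (h : ∀ p ∈ s, g p ∣ D (g p)) :
    (∏ p ∈ s, g p) ∣ D (∏ p ∈ s, g p) := by
  induction s using Finset.induction_on with
  | empty => simp
  | insert _ _ hns ih =>
    rename_i a s'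
    rw [Finset.prod_insert hns]
    obtain ⟨u, hu⟩ := ih (fun p hp => h p (Finset.mem_insert_of_mem hp))
    obtain ⟨v, hv⟩ := h a (Finset.mem_insert_self _ _)
    refine ⟨u + v, ?_⟩
    rw [Derivation.leibniz, smul_eq_mul, smul_eq_mul, hu, hv]
    ring

/-- Leibniz formula for finite products of derivations. -/
lemma derivation_prod {ι : Type*} [DecidableEq ι] (s : Finset ι) (g : ι → SS)
    (D : Derivation ℝ SS SS) :
    D (∏ p ∈ s, g p) = ∑ p ∈ s, (∏ q ∈ s.erase p, g q) * D (g p) := by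
  induction s using Finset.induction_on with
  | empty => simp
  | insert _ _ hns ih =>
    rename_i a s'
    rw [Finset.prod_insert hns, Derivation.leibniz, smul_eq_mul, smul_eq_mul, ih,
      Finset.sum_insert hns, Finset.erase_insert hns, Finset.mul_sum]
    rw [add_comm]
    congr 1
    refine Finset.sum_congr rfl fun p hp => ?_
    have hpa : p ≠ a := fun h' => hns (h' ▸ hp)
    rw [Finset.erase_insert_of_ne hpa.symm, Finset.prod_insert
      (fun hmem => hns (Finset.mem_of_mem_erase hmem))]
    ring

end DrAux
namespace DrAux

noncomputable def Wrow (r : ℕ) (k j : Fin r) : MvPolynomial (Fin r) ℝ :=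
  if (k : ℕ) < r - 1 then X j ^ (2 * (k : ℕ) + 1) else ∏ l ∈ Finset.univ.erase j, X l

noncomputable def formD (r : ℕ) (q : (Fin r × Fin r) × Bool) : MvPolynomial (Fin r) ℝ :=
  if q.2 then X q.1.1 + X q.1.2 else X q.1.1 - X q.1.2

lemma formD_true {r : ℕ} (u v : Fin r) : formD r ((u, v), true) = X u + X v := rfl
lemma formD_false {r : ℕ} (u v : Fin r) : formD r ((u, v), false) = X u - X v := rfl

def formsD (r : ℕ) : Finset ((Fin r × Fin r) × Bool) :=
  (Finset.univ.filter (fun p : Fin r × Fin r => p.1 < p.2)) ×ˢ Finset.univ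

lemma prod_formsD (r : ℕ) :
    ∏ q ∈ formsD r, formD r q =
      ∏ p ∈ Finset.univ.filter (fun p : Fin r × Fin r => p.1 < p.2),
        ((X p.1 - X p.2) * (X p.1 + X p.2)) := by
  rw [formsD, Finset.prod_product]
  refine Finset.prod_congr rfl fun p _ => ?_
  rw [Fintype.prod_bool]
  rw [show ((p.1, p.2), true) = (p, true) by simp, show ((p.1, p.2), false) = (p, false) by simp] at *
  rw [show formD r (p, true) = X p.1 + X p.2 from rfl, show formD r (p, false) = X p.1 - X p.2 from rfl]
  ring

lemma mem_formsD {r : ℕ} {q : (Fin r × Fin r) × Bool} :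
    q ∈ formsD r ↔ q.1.1 < q.1.2 := by
  simp [formsD, Finset.mem_product]

lemma prime_formD {n : ℕ} {q : (Fin (n+1) × Fin (n+1)) × Bool} (hq : q ∈ formsD (n+1)) :
    Prime (formD (n+1) q) := by
  have hij : q.1.1 ≠ q.1.2 := ne_of_lt (mem_formsD.mp hq)
  rcases q with ⟨⟨i, j⟩, b⟩
  cases b
  · rw [formD_false]; exact prime_sub hij
  · rw [formD_true]; exact prime_add hij

lemma not_dvd_formD {r : ℕ} {q q' : (Fin r × Fin r) × Bool} (hq : q ∈ formsD r)
    (hq' : q' ∈ formsD r) (hne : q ≠ q') : ¬ formD r q ∣ formD r q' := by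
  obtain ⟨⟨i, j⟩, b⟩ := q
  obtain ⟨⟨a, c⟩, b'⟩ := q'
  have hij : i < j := mem_formsD.mp hq
  have hac : a < c := mem_formsD.mp hq'
  have cast_inj : ∀ u v : Fin r, ((u : ℕ) : ℝ) = ((v : ℕ) : ℝ) → u = v := fun u v h =>
    Fin.val_injective (Nat.cast_injective h)
  cases b
  · -- q = X i - X j
    set x : Fin r → ℝ := fun l => if l = i then (j : ℕ) + 1 else (l : ℕ) + 1 with hx
    have hpos : ∀ l, 1 ≤ x l := by
      intro l; by_cases h : l = i <;> simp [hx, h] <;> positivity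
    have hxi : x i = (j : ℕ) + 1 := by simp [hx]
    have hxj : x j = (j : ℕ) + 1 := by simp [hx, (ne_of_lt hij).symm]
    have hfe : eval x (formD r ((i, j), false)) = 0 := by
      rw [formD_false, map_sub, eval_X, eval_X, hxi, hxj, sub_self]
    refine not_dvd_of_eval x hfe ?_
    cases b'
    · have hpair : (a, c) ≠ (i, j) := by intro h; apply hne; simp_all
      rw [formD_false, map_sub, eval_X, eval_X]
      intro h0
      have hxac : x a = x c := by linarith [sub_eq_zero.mp h0]
      by_cases ha : a = i
      · by_cases hc : c = i
        · exact absurd (ha.trans hc.symm) (ne_of_lt hac)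
        · have h1 : x a = (j:ℕ)+1 := by simp [hx, ha]
          have h2 : x c = (c:ℕ)+1 := by simp [hx, hc]
          have hjc : ((j:ℕ):ℝ) = ((c:ℕ):ℝ) := by rw [h1, h2] at hxac; linarith
          exact hpair (by rw [ha, cast_inj _ _ hjc.symm])
      · by_cases hc : c = i
        · have h1 : x a = (a:ℕ)+1 := by simp [hx, ha]
          have h2 : x c = (j:ℕ)+1 := by simp [hx, hc]
          have haj : ((a:ℕ):ℝ) = ((j:ℕ):ℝ) := by rw [h1, h2] at hxac; linarith
          have haj' : a = j := cast_inj _ _ haj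
          subst haj'; subst hc
          exact absurd (hac.trans hij) (lt_irrefl a)
        · have h1 : x a = (a:ℕ)+1 := by simp [hx, ha]
          have h2 : x c = (c:ℕ)+1 := by simp [hx, hc]
          have hac' : ((a:ℕ):ℝ) = ((c:ℕ):ℝ) := by rw [h1, h2] at hxac; linarith
          exact absurd (cast_inj _ _ hac') (ne_of_lt hac)
    · rw [formD_true, map_add, eval_X, eval_X]
      have := hpos a; have := hpos c; intro h0; linarith
  · -- q = X i + X j
    set x : Fin r → ℝ := fun l => if l = i then -((j : ℕ) + 1) else (l : ℕ) + 1 with hx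
    have hne_pos : ∀ l, l ≠ i → x l = (l : ℕ) + 1 := by intro l h; simp [hx, h]
    have hxi : x i = -((j : ℕ) + 1) := by simp [hx]
    have hxj : x j = (j : ℕ) + 1 := hne_pos j (ne_of_lt hij).symm
    have hfe : eval x (formD r ((i, j), true)) = 0 := by
      rw [formD_true, map_add, eval_X, eval_X, hxi, hxj]; ring
    refine not_dvd_of_eval x hfe ?_
    cases b'
    · rw [formD_false, map_sub, eval_X, eval_X]
      intro h0
      have hxac : x a = x c := by linarith [sub_eq_zero.mp h0]
      by_cases ha : a = i
      · have hc : c ≠ i := fun h => (ne_of_lt hac) (ha.trans h.symm)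
        rw [ha, hxi, hne_pos c hc] at hxac
        have : (0:ℝ) ≤ ((c:ℕ):ℝ) := Nat.cast_nonneg _
        have : (0:ℝ) ≤ ((j:ℕ):ℝ) := Nat.cast_nonneg _
        linarith
      · by_cases hc : c = i
        · rw [hne_pos a ha, hc, hxi] at hxac
          have : (0:ℝ) ≤ ((a:ℕ):ℝ) := Nat.cast_nonneg _
          have : (0:ℝ) ≤ ((j:ℕ):ℝ) := Nat.cast_nonneg _
          linarith
        · rw [hne_pos a ha, hne_pos c hc] at hxac
          have hac' : ((a:ℕ):ℝ) = ((c:ℕ):ℝ) := by linarith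
          exact absurd (cast_inj _ _ hac') (ne_of_lt hac)
    · have hpair : (a, c) ≠ (i, j) := by intro h; apply hne; simp_all
      rw [formD_true, map_add, eval_X, eval_X]
      intro h0
      by_cases ha : a = i
      · have hc : c ≠ i := fun h => (ne_of_lt hac) (ha.trans h.symm)
        rw [ha, hxi, hne_pos c hc] at h0
        have hcj : ((c:ℕ):ℝ) = ((j:ℕ):ℝ) := by linarith
        exact hpair (by rw [ha, cast_inj _ _ hcj])
      · by_cases hc : c = i
        · rw [hne_pos a ha, hc, hxi] at h0
          have haj : ((a:ℕ):ℝ) = ((j:ℕ):ℝ) := by linarith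
          have haj' : a = j := cast_inj _ _ haj
          subst haj'; subst hc
          exact absurd (hac.trans hij) (lt_irrefl a)
        · rw [hne_pos a ha, hne_pos c hc] at h0
          have : (0:ℝ) ≤ ((a:ℕ):ℝ) := Nat.cast_nonneg _
          have : (0:ℝ) ≤ ((c:ℕ):ℝ) := Nat.cast_nonneg _
          linarith
end DrAux
namespace DrAux

lemma prod_erase_sub {r : ℕ} {i j : Fin r} (hij : i ≠ j) :
    (∏ l ∈ Finset.univ.erase i, (X l : MvPolynomial (Fin r) ℝ)) -
      ∏ l ∈ Finset.univ.erase j, X l =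
    (X j - X i) * ∏ l ∈ (Finset.univ.erase i).erase j, X l := by
  have hji : j ∈ Finset.univ.erase i := Finset.mem_erase.mpr ⟨hij.symm, Finset.mem_univ _⟩
  have hij' : i ∈ Finset.univ.erase j := Finset.mem_erase.mpr ⟨hij, Finset.mem_univ _⟩
  rw [← Finset.mul_prod_erase _ _ hji, ← Finset.mul_prod_erase _ _ hij',
    show (Finset.univ.erase j).erase i = (Finset.univ.erase i).erase j from
      Finset.erase_right_comm]
  ring

lemma prod_erase_add {r : ℕ} {i j : Fin r} (hij : i ≠ j) :
    (∏ l ∈ Finset.univ.erase i, (X l : MvPolynomial (Fin r) ℝ)) +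
      ∏ l ∈ Finset.univ.erase j, X l =
    (X j + X i) * ∏ l ∈ (Finset.univ.erase i).erase j, X l := by
  have hji : j ∈ Finset.univ.erase i := Finset.mem_erase.mpr ⟨hij.symm, Finset.mem_univ _⟩
  have hij' : i ∈ Finset.univ.erase j := Finset.mem_erase.mpr ⟨hij, Finset.mem_univ _⟩
  rw [← Finset.mul_prod_erase _ _ hji, ← Finset.mul_prod_erase _ _ hij',
    show (Finset.univ.erase j).erase i = (Finset.univ.erase i).erase j from
      Finset.erase_right_comm]
  ring

lemma W_sub_dvd {r : ℕ} (k : Fin r) {i j : Fin r} (hij : i ≠ j) :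
    (X i - X j : MvPolynomial (Fin r) ℝ) ∣ (Wrow r k i - Wrow r k j) := by
  unfold Wrow
  by_cases h : (k : ℕ) < r - 1
  · rw [if_pos h, if_pos h]
    exact sub_dvd_pow_sub_pow _ _ _
  · rw [if_neg h, if_neg h, prod_erase_sub hij]
    exact Dvd.dvd.mul_right ⟨-1, by ring⟩ _
lemma W_add_dvd {r : ℕ} (k : Fin r) {i j : Fin r} (hij : i ≠ j) :
    (X i + X j : MvPolynomial (Fin r) ℝ) ∣ (Wrow r k i + Wrow r k j) := by
  unfold Wrow
  by_cases h : (k : ℕ) < r - 1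
  · rw [if_pos h, if_pos h]
    exact Odd.add_dvd_pow_add_pow _ _ ⟨(k : ℕ), by ring⟩
  · rw [if_neg h, if_neg h, prod_erase_add hij]
    exact Dvd.dvd.mul_right ⟨1, by ring⟩ _

/-- Key divisibility: the defining polynomial of `D_r` divides the determinant of any
matrix whose columns are "derivation-like" in the variables indexing rows. -/
lemma Q_dvd_det {n : ℕ} (A : Matrix (Fin (n+1)) (Fin (n+1)) (MvPolynomial (Fin (n+1)) ℝ))
    (hsub : ∀ i j : Fin (n+1), i ≠ j → ∀ k, (X i - X j) ∣ (A i k - A j k))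
    (hadd : ∀ i j : Fin (n+1), i ≠ j → ∀ k, (X i + X j) ∣ (A i k + A j k)) :
    (∏ p ∈ Finset.univ.filter (fun p : Fin (n+1) × Fin (n+1) => p.1 < p.2),
      ((X p.1 - X p.2) * (X p.1 + X p.2))) ∣ A.det := by
  classical
  rw [← prod_formsD]
  refine prod_primes_dvd _ _ (fun q hq => prime_formD hq)
    (fun q hq q' hq' hne => not_dvd_formD hq hq' hne) (fun q hq => ?_)
  obtain ⟨⟨i, j⟩, b⟩ := q
  have hij : i ≠ j := ne_of_lt (mem_formsD.mp hq)
  cases b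
  · -- X i - X j divides det A
    rw [formD_false]
    choose w hw using hsub i j hij
    have hdet : A.det = (A.updateRow i (((X i - X j : MvPolynomial (Fin (n+1)) ℝ)) • w)).det := by
      rw [show ((X i - X j : MvPolynomial (Fin (n+1)) ℝ)) • w = A i + (-1 : MvPolynomial (Fin (n+1)) ℝ) • A j from ?_]
      · rw [Matrix.det_updateRow_add_smul_self A hij]
      · funext k
        simp only [Pi.smul_apply, Pi.add_apply, smul_eq_mul, neg_one_mul, ← hw k]
        ring
    rw [hdet, Matrix.det_updateRow_smul]
    exact Dvd.intro _ rfl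
  · rw [formD_true]
    choose w hw using hadd i j hij
    have hdet : A.det = (A.updateRow i (((X i + X j : MvPolynomial (Fin (n+1)) ℝ)) • w)).det := by
      rw [show ((X i + X j : MvPolynomial (Fin (n+1)) ℝ)) • w = A i + A j from ?_]
      · rw [Matrix.det_updateRow_add_self A hij]
      · funext k
        simp only [Pi.smul_apply, Pi.add_apply, smul_eq_mul, ← hw k]
    rw [hdet, Matrix.det_updateRow_smul]
    exact Dvd.intro _ rfl

end DrAux
namespace DrAux

lemma pairs_to_sigma {n : ℕ} (g : Fin n × Fin n → MvPolynomial (Fin n) ℝ) :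
    ∏ p ∈ Finset.univ.filter (fun p : Fin n × Fin n => p.1 < p.2), g p =
      ∏ i : Fin n, ∏ j ∈ Finset.Ioi i, g (i, j) := by
  rw [Finset.prod_sigma']
  refine Finset.prod_bij (fun (x : Fin n × Fin n) _ => (⟨x.1, x.2⟩ : Σ _ : Fin n, Fin n))
    ?_ ?_ ?_ ?_
  · rintro ⟨i, j⟩ hx
    simp only [Finset.mem_filter, Finset.mem_univ, true_and] at hx
    simp [Finset.mem_sigma, Finset.mem_Ioi, hx]
  · rintro ⟨i, j⟩ h1 ⟨a, b⟩ h2 h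
    simpa using h
  · rintro ⟨i, j⟩ hp
    simp only [Finset.mem_sigma, Finset.mem_univ, Finset.mem_Ioi, true_and] at hp
    exact ⟨(i, j), by simp [hp], rfl⟩
  · intros; rfl

lemma QD_eq_sign_vandermonde {n : ℕ} :
    ∏ p ∈ Finset.univ.filter (fun p : Fin n × Fin n => p.1 < p.2),
      ((X p.1 - X p.2) * (X p.1 + X p.2) : MvPolynomial (Fin n) ℝ) =
    (-1 : MvPolynomial (Fin n) ℝ) ^ (∑ i : Fin n, (Finset.Ioi i).card) *
      ∏ i : Fin n, ∏ j ∈ Finset.Ioi i, (X j ^ 2 - X i ^ 2 : MvPolynomial (Fin n) ℝ) := by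
  rw [pairs_to_sigma (fun p => (X p.1 - X p.2) * (X p.1 + X p.2))]
  have h1 : ∀ i : Fin n, ∏ j ∈ Finset.Ioi i,
      ((X i - X j) * (X i + X j) : MvPolynomial (Fin n) ℝ) =
      (-1 : MvPolynomial (Fin n) ℝ) ^ (Finset.Ioi i).card *
        ∏ j ∈ Finset.Ioi i, (X j ^ 2 - X i ^ 2 : MvPolynomial (Fin n) ℝ) := by
    intro i
    rw [← Finset.prod_const, ← Finset.prod_mul_distrib]
    exact Finset.prod_congr rfl fun j _ => by ring
  calc ∏ i : Fin n, ∏ j ∈ Finset.Ioi i, ((X i - X j) * (X i + X j) : MvPolynomial (Fin n) ℝ)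
      = ∏ i : Fin n, ((-1 : MvPolynomial (Fin n) ℝ) ^ (Finset.Ioi i).card *
          ∏ j ∈ Finset.Ioi i, (X j ^ 2 - X i ^ 2)) := Finset.prod_congr rfl fun i _ => h1 i
    _ = _ := by
        rw [Finset.prod_mul_distrib, Finset.prod_pow_eq_pow_sum]

/-- Explicit determinant of the basis matrix. -/
lemma det_M {n : ℕ} :
    ∃ c : ℝ, c ≠ 0 ∧
      (Matrix.of fun k j : Fin (n+1) => Wrow (n+1) k j).det =
        C c * ∏ p ∈ Finset.univ.filter (fun p : Fin (n+1) × Fin (n+1) => p.1 < p.2),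
          ((X p.1 - X p.2) * (X p.1 + X p.2)) := by
  classical
  set S := MvPolynomial (Fin (n+1)) ℝ
  set m := ∑ i : Fin (n+1), (Finset.Ioi i).card with hm
  set V : S := ∏ i : Fin (n+1), ∏ j ∈ Finset.Ioi i, (X j ^ 2 - X i ^ 2) with hV
  set M : Matrix (Fin (n+1)) (Fin (n+1)) S := Matrix.of fun k j => Wrow (n+1) k j with hM
  set u : Fin (n+1) → S := fun k => if (k : ℕ) < n then 1 else ∏ l : Fin (n+1), X l with hu
  set B : Matrix (Fin (n+1)) (Fin (n+1)) S :=
    Matrix.of fun k j => (X j ^ 2) ^ ((finRotate (n+1) k : Fin (n+1)) : ℕ) with hB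
  have hprodX : (∏ l : Fin (n+1), (X l : S)) ≠ 0 :=
    Finset.prod_ne_zero_iff.mpr fun l _ => X_ne_zero l
  -- step B : column-scaled M equals row-scaled B
  have hMB : (Matrix.of fun k j : Fin (n+1) => X j * M k j) =
      (Matrix.of fun k j : Fin (n+1) => u k * B k j) := by
    funext k j
    simp only [Matrix.of_apply, hM, hu, hB, Wrow]
    by_cases h : (k : ℕ) < (n+1) - 1
    · have hn : (k : ℕ) < n := by simpa using h
      have hlast : k ≠ Fin.last n := by
        intro hk; rw [hk] at hn; simp at hn
      have hval : ((finRotate (n+1) k : Fin (n+1)) : ℕ) = (k : ℕ) + 1 := by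
        rw [finRotate_succ_apply, Fin.val_add_one]
        simp [hlast]
      rw [if_pos h, if_pos hn, hval, one_mul, ← pow_mul]
      ring
    · have hn : ¬ (k : ℕ) < n := by simpa using h
      have hlast : k = Fin.last n := by
        apply Fin.ext
        have := k.isLt
        simp only [Fin.val_last]
        omega
      have hval : ((finRotate (n+1) k : Fin (n+1)) : ℕ) = 0 := by
        rw [finRotate_succ_apply, hlast]
        simp
      rw [if_neg h, if_neg hn, hval, pow_zero, mul_one]
      exact Finset.mul_prod_erase Finset.univ _ (Finset.mem_univ j)
  have hprodu : ∏ k : Fin (n+1), u k = ∏ l : Fin (n+1), (X l : S) := by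
    have h1 : ∏ k : Fin (n+1), u k = u (Fin.last n) := by
      refine Finset.prod_eq_single (Fin.last n) (fun b _ hb => ?_)
        (fun h => absurd (Finset.mem_univ _) h)
      have hbn : (b : ℕ) < n := by
        have h2 := b.isLt
        have h3 : (b : ℕ) ≠ n := fun hbn => hb (Fin.ext (by simp [hbn]))
        omega
      simp [hu, hbn]
    rw [h1]
    simp [hu]
  have hdetB : B.det = ((-1 : S) ^ n) * V := by
    have : B = (Matrix.transpose (Matrix.vandermonde (fun j : Fin (n+1) => (X j ^ 2 : S)))).submatrix
        (finRotate (n+1)) id := by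
      funext k j
      simp only [hB, Matrix.of_apply, Matrix.submatrix_apply, Matrix.transpose_apply,
        Matrix.vandermonde_apply, id]
    rw [this, Matrix.det_permute, Matrix.det_transpose, Matrix.det_vandermonde, sign_finRotate]
    rw [hV]
    norm_cast
  have key : (∏ l : Fin (n+1), (X l : S)) * M.det =
      (∏ l : Fin (n+1), (X l : S)) * (((-1 : S) ^ n) * V) := by
    calc (∏ l : Fin (n+1), (X l : S)) * M.det
        = (Matrix.of fun k j : Fin (n+1) => X j * M k j).det := (Matrix.det_mul_row _ _).symm
      _ = (Matrix.of fun k j : Fin (n+1) => u k * B k j).det := by rw [hMB]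
      _ = (∏ k, u k) * B.det := Matrix.det_mul_column _ _
      _ = (∏ l : Fin (n+1), (X l : S)) * (((-1 : S) ^ n) * V) := by rw [hprodu, hdetB]
  have hdetM : M.det = ((-1 : S) ^ n) * V := mul_left_cancel₀ hprodX key
  refine ⟨(-1 : ℝ) ^ (n + m), by positivity, ?_⟩
  have hQV : (∏ p ∈ Finset.univ.filter (fun p : Fin (n+1) × Fin (n+1) => p.1 < p.2),
      ((X p.1 - X p.2) * (X p.1 + X p.2) : S)) = (-1 : S) ^ m * V := QD_eq_sign_vandermonde
  have hC : (C ((-1 : ℝ) ^ (n + m)) : S) = (-1 : S) ^ (n + m) := by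
    rw [map_pow, map_neg, map_one]
  rw [hdetM, hQV, hC, ← mul_assoc, ← pow_add,
    show n + m + m = n + (m + m) from by omega, pow_add,
    Even.neg_one_pow ⟨m, rfl⟩, mul_one]

end DrAux

set_option maxHeartbeats 1000000 in
/-- The reflection arrangement of type `D_r`, with defining polynomial
`∏_{1≤i<j≤r}(x_i−x_j)(x_i+x_j)`, is free with exponents `{1, 3, 5, …, 2r−3} ∪ {r−1}`. -/
theorem Dr_free_with_exponents (r : ℕ) (hr : 2 ≤ r) :
    FreeWithExp r
      (∏ p ∈ Finset.univ.filter (fun p : Fin r × Fin r => p.1 < p.2),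
          ((X p.1 - X p.2) * (X p.1 + X p.2)))
      (Finset.univ.val.map
        (fun k : Fin r => if (k : ℕ) < r - 1 then 2 * (k : ℕ) + 1 else r - 1)) := by
  classical
  obtain ⟨n, rfl⟩ : ∃ n, r = n + 1 := ⟨r - 1, by omega⟩
  set S := MvPolynomial (Fin (n+1)) ℝ with hS
  set Q : S := ∏ p ∈ Finset.univ.filter (fun p : Fin (n+1) × Fin (n+1) => p.1 < p.2),
      ((X p.1 - X p.2) * (X p.1 + X p.2)) with hQdef
  set θ : Fin (n+1) → Derivation ℝ S S :=
    fun k => mkDerivation ℝ (fun j => DrAux.Wrow (n+1) k j) with hθ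
  have hθX : ∀ k j, θ k (X j) = DrAux.Wrow (n+1) k j := fun k j => mkDerivation_X _ _ _
  set M : Matrix (Fin (n+1)) (Fin (n+1)) S :=
    Matrix.of fun k j => DrAux.Wrow (n+1) k j with hM
  obtain ⟨c, hc0, hdetM⟩ := DrAux.det_M (n := n)
  have hQforms : Q = ∏ q ∈ DrAux.formsD (n+1), DrAux.formD (n+1) q :=
    (DrAux.prod_formsD (n+1)).symm
  have hQne : Q ≠ 0 := by
    rw [hQforms]
    exact Finset.prod_ne_zero_iff.mpr fun q hq => (DrAux.prime_formD hq).ne_zero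
  have hCc : (C c : S) ≠ 0 := fun h => hc0 (by simpa using h)
  have hdetMQ : M.det = C c * Q := hdetM
  have hdetne : M.det ≠ 0 := by rw [hdetMQ]; exact mul_ne_zero hCc hQne
  refine ⟨θ, fun k : Fin (n+1) => if (k : ℕ) < n + 1 - 1 then 2 * (k : ℕ) + 1 else n + 1 - 1,
    rfl, ?_, ?_, ?_, ?_⟩
  · -- θ k Q ∈ (Q)
    intro k
    rw [Ideal.mem_span_singleton, hQdef]
    refine DrAux.dvd_derivation_of_dvd _ _ _ (fun p hp => ?_)
    have hij : p.1 ≠ p.2 := ne_of_lt (Finset.mem_filter.mp hp).2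
    obtain ⟨u, hu⟩ : (X p.1 + X p.2 : S) ∣ θ k (X p.1 + X p.2) := by
      rw [map_add, hθX, hθX]; exact DrAux.W_add_dvd k hij
    obtain ⟨v, hv⟩ : (X p.1 - X p.2 : S) ∣ θ k (X p.1 - X p.2) := by
      rw [map_sub, hθX, hθX]; exact DrAux.W_sub_dvd k hij
    exact ⟨u + v, by rw [Derivation.leibniz, smul_eq_mul, smul_eq_mul, hu, hv]; ring⟩
  · -- homogeneity
    intro k j
    rw [mem_homogeneousSubmodule, hθX, DrAux.Wrow]
    dsimp only
    by_cases h : (k : ℕ) < n + 1 - 1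
    · rw [if_pos h, if_pos h]
      exact isHomogeneous_X_pow _ _
    · rw [if_neg h, if_neg h]
      have hcard : ∑ _l ∈ Finset.univ.erase j, 1 = n + 1 - 1 := by
        rw [Finset.sum_const, smul_eq_mul, mul_one, Finset.card_erase_of_mem (Finset.mem_univ _),
          Finset.card_univ, Fintype.card_fin]
      exact hcard ▸ IsHomogeneous.prod (Finset.univ.erase j) (fun l => (X l : S)) (fun _ => 1)
        (fun l _ => isHomogeneous_X _ _)
  · -- linear independence
    rw [Fintype.linearIndependent_iff]
    intro g hg k
    have happ : ∀ j, ∑ kk, DrAux.Wrow (n+1) kk j * g kk = 0 := by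
      intro j
      have h1 : (∑ i, g i • θ i) (X j) = 0 := by rw [hg]; simp
      rw [DrAux.derivation_sum_apply] at h1
      calc ∑ kk, DrAux.Wrow (n+1) kk j * g kk
          = ∑ kk, (g kk • θ kk) (X j) := Finset.sum_congr rfl fun kk _ => by
            rw [Derivation.smul_apply, hθX, smul_eq_mul, mul_comm]
        _ = 0 := h1
    have hmv : Matrix.mulVec (Matrix.transpose M) g = 0 := by
      funext j
      simpa [Matrix.mulVec, dotProduct, Matrix.transpose_apply, hM] using happ j
    have h2 : (Matrix.transpose M).det • g = 0 := by
      have h3 := congrArg (fun w => Matrix.mulVec ((Matrix.transpose M).adjugate) w) hmv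
      rw [Matrix.mulVec_mulVec, Matrix.adjugate_mul, Matrix.smul_mulVec,
        Matrix.one_mulVec, Matrix.mulVec_zero] at h3
      exact h3
    have h4 : M.det * g k = 0 := by
      have := congrFun h2 k
      simpa [Matrix.det_transpose, smul_eq_mul] using this
    exact (mul_eq_zero.mp h4).resolve_left hdetne
  · -- spanning
    intro η hη
    have hQdvd : Q ∣ η Q := Ideal.mem_span_singleton.mp hη
    -- each linear form divides its η-image
    have hform : ∀ q ∈ DrAux.formsD (n+1),
        DrAux.formD (n+1) q ∣ η (DrAux.formD (n+1) q) := by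
      intro q₀ hq₀
      have hprime := DrAux.prime_formD hq₀
      have hdvdQ : DrAux.formD (n+1) q₀ ∣ η Q :=
        dvd_trans (hQforms ▸ Finset.dvd_prod_of_mem _ hq₀) hQdvd
      rw [hQforms, DrAux.derivation_prod] at hdvdQ
      have hrest : DrAux.formD (n+1) q₀ ∣
          ∑ q ∈ (DrAux.formsD (n+1)).erase q₀,
            (∏ q' ∈ (DrAux.formsD (n+1)).erase q, DrAux.formD (n+1) q') *
              η (DrAux.formD (n+1) q) := by
        refine Finset.dvd_sum fun q hq => ?_
        have hq₀mem : q₀ ∈ (DrAux.formsD (n+1)).erase q :=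
          Finset.mem_erase.mpr ⟨(Finset.mem_erase.mp hq).1.symm, hq₀⟩
        exact (Finset.dvd_prod_of_mem _ hq₀mem).mul_right _
      have hterm : DrAux.formD (n+1) q₀ ∣
          (∏ q' ∈ (DrAux.formsD (n+1)).erase q₀, DrAux.formD (n+1) q') *
            η (DrAux.formD (n+1) q₀) := by
        have h6 : (∏ q' ∈ (DrAux.formsD (n+1)).erase q₀, DrAux.formD (n+1) q') *
            η (DrAux.formD (n+1) q₀) =
            (∑ q ∈ DrAux.formsD (n+1),
              (∏ q' ∈ (DrAux.formsD (n+1)).erase q, DrAux.formD (n+1) q') *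
                η (DrAux.formD (n+1) q)) -
            ∑ q ∈ (DrAux.formsD (n+1)).erase q₀,
              (∏ q' ∈ (DrAux.formsD (n+1)).erase q, DrAux.formD (n+1) q') *
                η (DrAux.formD (n+1) q) := by
          rw [← Finset.add_sum_erase _ _ hq₀]; ring
        rw [h6]; exact dvd_sub hdvdQ hrest
      rcases hprime.dvd_or_dvd hterm with hl | hr'
      · exfalso
        obtain ⟨q, hq, hdq⟩ := (hprime.dvd_finset_prod_iff _).mp hl
        exact DrAux.not_dvd_formD hq₀ (Finset.mem_of_mem_erase hq)
          (fun h => (Finset.mem_erase.mp hq).1 h.symm) hdq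
      · exact hr'
    -- symmetrized divisibility for η
    have hηsub : ∀ {i j : Fin (n+1)}, i ≠ j → (X i - X j : S) ∣ (η (X i) - η (X j)) := by
      intro i j hij
      rcases lt_or_gt_of_ne hij with h | h
      · have := hform ((i, j), false) (DrAux.mem_formsD.mpr h)
        rwa [DrAux.formD_false, map_sub] at this
      · have := hform ((j, i), false) (DrAux.mem_formsD.mpr h)
        rw [DrAux.formD_false, map_sub] at this
        obtain ⟨w, hw⟩ := this
        exact ⟨w, by linear_combination -hw⟩
    have hηadd : ∀ {i j : Fin (n+1)}, i ≠ j → (X i + X j : S) ∣ (η (X i) + η (X j)) := by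
      intro i j hij
      rcases lt_or_gt_of_ne hij with h | h
      · have := hform ((i, j), true) (DrAux.mem_formsD.mpr h)
        rwa [DrAux.formD_true, map_add] at this
      · have := hform ((j, i), true) (DrAux.mem_formsD.mpr h)
        rw [DrAux.formD_true, map_add] at this
        obtain ⟨w, hw⟩ := this
        exact ⟨w, by linear_combination hw⟩
    set v : Fin (n+1) → S := fun j => η (X j) with hv
    -- Q divides each Cramer determinant
    have hQcr : ∀ k, Q ∣ (M.updateRow k v).det := by
      intro k
      rw [← Matrix.det_transpose, hQdef]
      refine DrAux.Q_dvd_det _ ?_ ?_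
      · intro i j hij kk
        simp only [Matrix.transpose_apply, Matrix.updateRow_apply]
        by_cases h : kk = k
        · rw [if_pos h, if_pos h]; exact hηsub hij
        · rw [if_neg h, if_neg h]
          simp only [hM, Matrix.of_apply]
          exact DrAux.W_sub_dvd kk hij
      · intro i j hij kk
        simp only [Matrix.transpose_apply, Matrix.updateRow_apply]
        by_cases h : kk = k
        · rw [if_pos h, if_pos h]; exact hηadd hij
        · rw [if_neg h, if_neg h]
          simp only [hM, Matrix.of_apply]
          exact DrAux.W_add_dvd kk hij
    choose qv hqv using fun k => hQcr k
    set p : Fin (n+1) → S := fun k => C c⁻¹ * qv k with hp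
    have hsolve : ∀ j, v j = ∑ k, p k * DrAux.Wrow (n+1) k j := by
      intro j
      have hcr := congrFun (Matrix.mulVec_cramer (Matrix.transpose M) v) j
      have hcrk : ∀ k, Matrix.cramer (Matrix.transpose M) v k = Q * qv k := by
        intro k
        rw [Matrix.cramer_transpose_apply]
        exact hqv k
      have hL : (Matrix.mulVec (Matrix.transpose M) (Matrix.cramer (Matrix.transpose M) v)) j =
          Q * ∑ k, DrAux.Wrow (n+1) k j * qv k := by
        simp only [Matrix.mulVec, dotProduct, hcrk]
        simp only [Matrix.transpose_apply, hM,
          Matrix.of_apply, Finset.mul_sum]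
        exact (Finset.sum_congr rfl fun k _ => by ring).trans (Finset.mul_sum _ _ _).symm
      have hR : ((Matrix.transpose M).det • v) j = Q * (C c * v j) := by
        simp only [Pi.smul_apply, smul_eq_mul, Matrix.det_transpose, hdetMQ]
        ring
      have heq : ∑ k, DrAux.Wrow (n+1) k j * qv k = C c * v j :=
        mul_left_cancel₀ hQne (by rw [← hL, ← hR, hcr])
      have : C c⁻¹ * ∑ k, DrAux.Wrow (n+1) k j * qv k = v j := by
        rw [heq, ← mul_assoc, ← map_mul, inv_mul_cancel₀ hc0, map_one, one_mul]
      rw [← this, Finset.mul_sum]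
      exact Finset.sum_congr rfl fun k _ => by rw [hp]; ring
    have hηeq : η = ∑ k, p k • θ k := by
      apply derivation_ext
      intro j
      rw [DrAux.derivation_sum_apply]
      have : ∀ k, (p k • θ k) (X j) = p k * DrAux.Wrow (n+1) k j := fun k => by
        rw [Derivation.smul_apply, hθX, smul_eq_mul]
      rw [Finset.sum_congr rfl fun k _ => this k]
      exact hsolve j
    rw [hηeq]
    exact Submodule.sum_mem _ fun k _ =>
      Submodule.smul_mem _ _ (Submodule.subset_span ⟨k, rfl⟩)
end

section
/- For 0 ≤ k ≤ r, the arrangement D_r^k with defining polynomial x₁⋯x_k ∏_{1≤i<j≤r}(x_i−x_j)(x_i+x_j) is inductively free. (In particular D_r^0 is the D_r reflection arrangement and D_r^r is the B_r reflection arrangement.) -/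
open Module

/-- `H` is a hyperplane of the ambient subspace `X`. -/
def IsHypIn {n : ℕ} (X H : Submodule ℝ (Fin n → ℝ)) : Prop :=
  H < X ∧ finrank ℝ H + 1 = finrank ℝ X

/-- the restriction `A^H = {H ∩ K : K ∈ A \ {H}}` of the arrangement `A` to `H`. -/
noncomputable def restrictArr {n : ℕ} (A : Finset (Submodule ℝ (Fin n → ℝ)))
    (H : Submodule ℝ (Fin n → ℝ)) : Finset (Submodule ℝ (Fin n → ℝ)) :=
  letI := Classical.decEq (Submodule ℝ (Fin n → ℝ))
  (A.erase H).image (fun K => H ⊓ K)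

/-- Inductive freeness (with exponents) of a central arrangement `A` consisting of
hyperplanes of the ambient subspace `X ≤ ℝ^n`, following Orlik–Terao: the empty
arrangement of rank `ℓ` is inductively free with exponents `ℓ` zeros, and `A` is
inductively free with exponents `e'' ∪ {d+1}` whenever for some `H ∈ A` the deleted
arrangement `A' = A \ {H}` is inductively free with exponents `e'' ∪ {d}` and the
restriction `A'' = A^H` is inductively free with exponents `e'' ⊆ exp A'`. -/
inductive IndFree {n : ℕ} :
    Submodule ℝ (Fin n → ℝ) → Finset (Submodule ℝ (Fin n → ℝ)) → Multiset ℕ → Prop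
  | empty (X : Submodule ℝ (Fin n → ℝ)) :
      IndFree X ∅ (Multiset.replicate (finrank ℝ X) 0)
  | add (X : Submodule ℝ (Fin n → ℝ)) (A : Finset (Submodule ℝ (Fin n → ℝ)))
      (H : Submodule ℝ (Fin n → ℝ)) (e'' : Multiset ℕ) (d : ℕ)
      (hH : H ∈ A) (hhyp : ∀ K ∈ A, IsHypIn X K)
      (h' : IndFree X (letI := Classical.decEq (Submodule ℝ (Fin n → ℝ)); A.erase H)
        (d ::ₘ e''))
      (h'' : IndFree H (restrictArr A H) e'') :
      IndFree X A ((d + 1) ::ₘ e'')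

namespace DrkAux

variable {r : ℕ}

noncomputable instance instDecEqSub {n : ℕ} : DecidableEq (Submodule ℝ (Fin n → ℝ)) :=
  Classical.decEq _

/-- coordinate subspace: coordinates outside `L` vanish -/
def XL (L : Finset (Fin r)) : Submodule ℝ (Fin r → ℝ) where
  carrier := {x | ∀ i, i ∉ L → x i = 0}
  add_mem' := by intro a b ha hb i hi; simp only [Pi.add_apply, ha i hi, hb i hi, add_zero]
  zero_mem' := by intro i hi; rfl
  smul_mem' := by intro c x hx i hi; simp only [Pi.smul_apply, hx i hi, smul_eq_mul, mul_zero]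

lemma mem_XL {L : Finset (Fin r)} {x : Fin r → ℝ} : x ∈ XL L ↔ ∀ i, i ∉ L → x i = 0 := Iff.rfl

noncomputable def pairHyp (L : Finset (Fin r)) (i j : Fin r) (s : ℝ) : Submodule ℝ (Fin r → ℝ) :=
  XL L ⊓ LinearMap.ker ((LinearMap.proj i : (Fin r → ℝ) →ₗ[ℝ] ℝ) - s • LinearMap.proj j)

noncomputable def zeroHyp (L : Finset (Fin r)) (i : Fin r) : Submodule ℝ (Fin r → ℝ) :=
  XL L ⊓ LinearMap.ker (LinearMap.proj i : (Fin r → ℝ) →ₗ[ℝ] ℝ)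

lemma mem_pairHyp {L : Finset (Fin r)} {i j : Fin r} {s : ℝ} {x : Fin r → ℝ} :
    x ∈ pairHyp L i j s ↔ x ∈ XL L ∧ x i = s * x j := by
  simp [pairHyp, sub_eq_zero, LinearMap.mem_ker, LinearMap.proj_apply]

lemma mem_zeroHyp {L : Finset (Fin r)} {i : Fin r} {x : Fin r → ℝ} :
    x ∈ zeroHyp L i ↔ x ∈ XL L ∧ x i = 0 := by
  simp [zeroHyp, LinearMap.mem_ker, LinearMap.proj_apply]

/-- pairs from `P`, zeros from `Z`, ambient coordinate set `L` -/
noncomputable def FullA (P Z L : Finset (Fin r)) : Finset (Submodule ℝ (Fin r → ℝ)) :=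
  (P.offDiag.image fun p => pairHyp L p.1 p.2 1) ∪
    (P.offDiag.image fun p => pairHyp L p.1 p.2 (-1)) ∪ Z.image (zeroHyp L)

noncomputable def PartA (L' Z T S : Finset (Fin r)) (m : Fin r) :
    Finset (Submodule ℝ (Fin r → ℝ)) :=
  FullA L' Z (insert m L') ∪ (T.image fun i => pairHyp (insert m L') i m 1) ∪
    (S.image fun i => pairHyp (insert m L') i m (-1))

def Expo (n z : ℕ) : Multiset ℕ :=
  if n = 0 then 0 else ((Multiset.range (n - 1)).map fun i => 2 * i + 1) + {n - 1 + z}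

lemma mem_FullA {P Z L : Finset (Fin r)} {K : Submodule ℝ (Fin r → ℝ)} :
    K ∈ FullA P Z L ↔
      (∃ i j, i ∈ P ∧ j ∈ P ∧ i ≠ j ∧
        (K = pairHyp L i j 1 ∨ K = pairHyp L i j (-1))) ∨ ∃ i ∈ Z, K = zeroHyp L i := by
  simp only [FullA, Finset.mem_union, Finset.mem_image, Finset.mem_offDiag, Prod.exists]
  constructor
  · rintro ((⟨a, b, ⟨ha, hb, hab⟩, rfl⟩ | ⟨a, b, ⟨ha, hb, hab⟩, rfl⟩) | ⟨i, hi, rfl⟩)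
    · exact Or.inl ⟨a, b, ha, hb, hab, Or.inl rfl⟩
    · exact Or.inl ⟨a, b, ha, hb, hab, Or.inr rfl⟩
    · exact Or.inr ⟨i, hi, rfl⟩
  · rintro (⟨a, b, ha, hb, hab, (rfl | rfl)⟩ | ⟨i, hi, rfl⟩)
    · exact Or.inl (Or.inl ⟨a, b, ⟨ha, hb, hab⟩, rfl⟩)
    · exact Or.inl (Or.inr ⟨a, b, ⟨ha, hb, hab⟩, rfl⟩)
    · exact Or.inr ⟨i, hi, rfl⟩

end DrkAux

section CHUNK2
set_option maxHeartbeats 1000000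
set_option synthInstance.maxHeartbeats 200000
namespace DrkAux
variable {r : ℕ}

lemma XL_empty : XL (∅ : Finset (Fin r)) = ⊥ := by
  ext x
  simp only [mem_XL, Finset.notMem_empty, not_false_iff, forall_true_left, Submodule.mem_bot]
  exact ⟨fun h => funext fun i => h i, fun h i => by rw [h]; rfl⟩

lemma XL_mono {L L' : Finset (Fin r)} (h : L ⊆ L') : XL L ≤ XL L' := by
  intro x hx i hi
  exact hx i fun hiL => hi (h hiL)

lemma single_mem_XL {L : Finset (Fin r)} {m : Fin r} (hm : m ∈ L) :
    (Pi.single m 1 : Fin r → ℝ) ∈ XL L := by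
  intro i hi
  rw [Pi.single_apply, if_neg]
  rintro rfl; exact hi hm

lemma span_single_inf_XL {L : Finset (Fin r)} {m : Fin r} (hm : m ∉ L) :
    Submodule.span ℝ {(Pi.single m 1 : Fin r → ℝ)} ⊓ XL L = ⊥ := by
  rw [eq_bot_iff]
  rintro x ⟨hx1, hx2⟩
  obtain ⟨a, rfl⟩ := Submodule.mem_span_singleton.1 hx1
  have := hx2 m hm
  simp only [Pi.smul_apply, Pi.single_eq_same, smul_eq_mul, mul_one] at this
  subst this; simp

lemma XL_insert {L : Finset (Fin r)} {m : Fin r} (hm : m ∉ L) :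
    XL (insert m L) = XL L ⊔ Submodule.span ℝ {(Pi.single m 1 : Fin r → ℝ)} := by
  apply le_antisymm
  · intro x hx
    rw [Submodule.mem_sup]
    refine ⟨x - x m • (Pi.single m 1 : Fin r → ℝ), ?_, x m • (Pi.single m 1 : Fin r → ℝ),
      Submodule.smul_mem _ _ (Submodule.mem_span_singleton_self _), sub_add_cancel x _⟩
    intro i hi
    rcases eq_or_ne i m with rfl | him
    · simp
    · have : i ∉ insert m L := by simp [him, hi]
      simp [Pi.single_apply, him, hx i this]
  · refine sup_le (XL_mono (Finset.subset_insert _ _)) ?_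
    rw [Submodule.span_le, Set.singleton_subset_iff]
    exact single_mem_XL (Finset.mem_insert_self _ _)

lemma finrank_XL (L : Finset (Fin r)) : finrank ℝ (XL L) = L.card := by
  classical
  induction L using Finset.induction_on with
  | empty => rw [XL_empty]; simp
  | @insert m L hm ih =>
    rw [XL_insert hm, Finset.card_insert_of_notMem hm]
    have h1 := Submodule.finrank_sup_add_finrank_inf_eq (XL L)
      (Submodule.span ℝ {(Pi.single m 1 : Fin r → ℝ)})
    rw [inf_comm, span_single_inf_XL hm] at h1
    have h2 : finrank ℝ (Submodule.span ℝ {(Pi.single m 1 : Fin r → ℝ)}) = 1 :=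
      finrank_span_singleton (by
        intro h
        have := congrFun h m
        simp [Pi.single_eq_same] at this)
    simp only [finrank_bot, add_zero] at h1
    omega

lemma isHypIn_inf_ker (X : Submodule ℝ (Fin r → ℝ)) (f : (Fin r → ℝ) →ₗ[ℝ] ℝ)
    (x0 : Fin r → ℝ) (hx0 : x0 ∈ X) (hf : f x0 ≠ 0) :
    IsHypIn X (X ⊓ LinearMap.ker f) := by
  set g : X →ₗ[ℝ] ℝ := f.comp X.subtype with hg
  have hrange : LinearMap.range g = ⊤ := by
    rw [LinearMap.range_eq_top]
    intro c
    refine ⟨(c / f x0) • ⟨x0, hx0⟩, ?_⟩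
    simp [hg, div_mul_cancel₀, hf]
  have hmap : (LinearMap.ker g).map X.subtype = X ⊓ LinearMap.ker f := by
    ext x
    simp only [Submodule.mem_map, LinearMap.mem_ker, Submodule.mem_inf]
    constructor
    · rintro ⟨⟨y, hy⟩, hgy, rfl⟩
      exact ⟨hy, hgy⟩
    · rintro ⟨hx, hfx⟩
      exact ⟨⟨x, hx⟩, hfx, rfl⟩
  have hfr : finrank ℝ (X ⊓ LinearMap.ker f : Submodule ℝ (Fin r → ℝ)) =
      finrank ℝ (LinearMap.ker g) := by
    rw [← hmap]
    exact (Submodule.equivMapOfInjective X.subtype (Submodule.injective_subtype X)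
      (LinearMap.ker g)).finrank_eq.symm
  have hsum := LinearMap.finrank_range_add_finrank_ker g
  rw [hrange] at hsum
  have htop : finrank ℝ (⊤ : Submodule ℝ ℝ) = 1 := by simp
  rw [htop] at hsum
  constructor
  · refine lt_of_le_of_ne inf_le_left ?_
    intro h
    have hx0' : x0 ∈ X ⊓ LinearMap.ker f := h.symm ▸ hx0
    exact hf hx0'.2
  · omega

end DrkAux
end CHUNK2

section CHUNK3
set_option maxHeartbeats 1000000
set_option synthInstance.maxHeartbeats 200000
namespace DrkAux
variable {r : ℕ}

lemma isHypIn_pairHyp {L : Finset (Fin r)} {i j : Fin r} (hi : i ∈ L) (hij : i ≠ j) (s : ℝ) :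
    IsHypIn (XL L) (pairHyp L i j s) := by
  apply isHypIn_inf_ker _ _ (Pi.single i 1 : Fin r → ℝ) (single_mem_XL hi)
  have hji : j ≠ i := hij.symm
  simp [LinearMap.proj_apply, Pi.single_apply, hji]

lemma isHypIn_zeroHyp {L : Finset (Fin r)} {i : Fin r} (hi : i ∈ L) :
    IsHypIn (XL L) (zeroHyp L i) := by
  apply isHypIn_inf_ker _ _ (Pi.single i 1 : Fin r → ℝ) (single_mem_XL hi)
  simp [LinearMap.proj_apply]

lemma finrank_map_equiv {n : ℕ} (g : (Fin n → ℝ) ≃ₗ[ℝ] (Fin n → ℝ))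
    (p : Submodule ℝ (Fin n → ℝ)) :
    finrank ℝ (p.map (g : (Fin n → ℝ) →ₗ[ℝ] (Fin n → ℝ))) = finrank ℝ p :=
  (Submodule.equivMapOfInjective _ g.injective p).finrank_eq.symm

lemma isHypIn_map {n : ℕ} (g : (Fin n → ℝ) ≃ₗ[ℝ] (Fin n → ℝ))
    {X K : Submodule ℝ (Fin n → ℝ)} (h : IsHypIn X K) :
    IsHypIn (X.map (g : (Fin n → ℝ) →ₗ[ℝ] (Fin n → ℝ)))
      (K.map (g : (Fin n → ℝ) →ₗ[ℝ] (Fin n → ℝ))) := by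
  refine ⟨?_, ?_⟩
  · exact (Submodule.orderIsoMapComap g).strictMono h.1
  · rw [finrank_map_equiv, finrank_map_equiv]; exact h.2

lemma IndFree.map_equiv {n : ℕ} (g : (Fin n → ℝ) ≃ₗ[ℝ] (Fin n → ℝ))
    {X : Submodule ℝ (Fin n → ℝ)} {A : Finset (Submodule ℝ (Fin n → ℝ))} {e : Multiset ℕ}
    (h : IndFree X A e) :
    IndFree (X.map (g : (Fin n → ℝ) →ₗ[ℝ] (Fin n → ℝ)))
      (A.image fun K => K.map (g : (Fin n → ℝ) →ₗ[ℝ] (Fin n → ℝ))) e := by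
  induction h with
  | empty X =>
      rw [Finset.image_empty]
      have := IndFree.empty (n := n) (X.map (g : (Fin n → ℝ) →ₗ[ℝ] (Fin n → ℝ)))
      rwa [finrank_map_equiv] at this
  | add X A H e'' d hH hhyp h' h'' ih' ih'' =>
      set F : Submodule ℝ (Fin n → ℝ) → Submodule ℝ (Fin n → ℝ) :=
        fun K => K.map (g : (Fin n → ℝ) →ₗ[ℝ] (Fin n → ℝ)) with hF
      have Finj : Function.Injective F := Submodule.map_injective_of_injective g.injective
      have herase : (A.image F).erase (F H) = (A.erase H).image F :=
        (Finset.image_erase Finj A H).symm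
      have hrest : restrictArr (A.image F) (F H) = (restrictArr A H).image F := by
        unfold restrictArr
        rw [herase, Finset.image_image, Finset.image_image]
        apply Finset.image_congr
        intro K hK
        simp only [Function.comp_apply, hF]
        exact (Submodule.map_inf (g : (Fin n → ℝ) →ₗ[ℝ] (Fin n → ℝ)) g.injective).symm
      refine IndFree.add _ _ (F H) e'' d (Finset.mem_image_of_mem F hH) ?_ ?_ ?_
      · intro K hK
        obtain ⟨K₀, hK₀, rfl⟩ := Finset.mem_image.1 hK
        exact isHypIn_map g (hhyp K₀ hK₀)
      · rw [herase]; exact ih'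
      · rw [hrest]; exact ih''

lemma sup_inf_self_of_disj {n : ℕ} {V X K : Submodule ℝ (Fin n → ℝ)}
    (hdis : V ⊓ X = ⊥) (hK : K ≤ X) : (K ⊔ V) ⊓ X = K := by
  apply le_antisymm
  · rintro x ⟨h1, h2⟩
    obtain ⟨k, hk, v, hv, rfl⟩ := Submodule.mem_sup.1 h1
    have hvX : v ∈ X := by
      have : v = k + v - k := by abel
      rw [this]; exact Submodule.sub_mem _ h2 (hK hk)
    have : v ∈ V ⊓ X := ⟨hv, hvX⟩
    rw [hdis] at this
    simp only [Submodule.mem_bot] at this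
    subst this; simpa using hk
  · exact le_inf le_sup_left hK

lemma sup_inj_of_disj {n : ℕ} {V X K K' : Submodule ℝ (Fin n → ℝ)}
    (hdis : V ⊓ X = ⊥) (hK : K ≤ X) (hK' : K' ≤ X) (h : K ⊔ V = K' ⊔ V) : K = K' := by
  rw [← sup_inf_self_of_disj hdis hK, ← sup_inf_self_of_disj hdis hK', h]

lemma sup_inf_sup_of_disj {n : ℕ} {V X K K' : Submodule ℝ (Fin n → ℝ)}
    (hdis : V ⊓ X = ⊥) (hK : K ≤ X) (hK' : K' ≤ X) :
    (K ⊔ V) ⊓ (K' ⊔ V) = (K ⊓ K') ⊔ V := by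
  apply le_antisymm
  · rintro x ⟨h1, h2⟩
    obtain ⟨k, hk, v, hv, hx⟩ := Submodule.mem_sup.1 h1
    obtain ⟨k', hk', v', hv', hx'⟩ := Submodule.mem_sup.1 h2
    have h4 : k + v = k' + v' := hx.trans hx'.symm
    have key : v' - v ∈ V ⊓ X := by
      refine ⟨Submodule.sub_mem _ hv' hv, ?_⟩
      have h3 : v' - v = k - k' := by
        rw [sub_eq_sub_iff_add_eq_add, add_comm v' k']
        exact h4.symm
      rw [h3]
      exact Submodule.sub_mem _ (hK hk) (hK' hk')
    rw [hdis] at key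
    simp only [Submodule.mem_bot, sub_eq_zero] at key
    rw [key] at h4
    have hkk : k = k' := add_right_cancel h4
    refine Submodule.mem_sup.2 ⟨k, ⟨hk, hkk ▸ hk'⟩, v, hv, hx⟩
  · exact le_inf (sup_le_sup_right inf_le_left _) (sup_le_sup_right inf_le_right _)

lemma finrank_sup_one {n : ℕ} {V K : Submodule ℝ (Fin n → ℝ)}
    (hV : finrank ℝ V = 1) (hdis : V ⊓ K = ⊥) :
    finrank ℝ (K ⊔ V : Submodule ℝ (Fin n → ℝ)) = finrank ℝ K + 1 := by
  have h1 := Submodule.finrank_sup_add_finrank_inf_eq K V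
  rw [inf_comm, hdis] at h1
  simp only [finrank_bot, add_zero] at h1
  omega

lemma isHypIn_sup {n : ℕ} {V X K : Submodule ℝ (Fin n → ℝ)}
    (hV : finrank ℝ V = 1) (hdis : V ⊓ X = ⊥) (h : IsHypIn X K) :
    IsHypIn (X ⊔ V) (K ⊔ V) := by
  have hKX : K ≤ X := h.1.le
  have hdisK : V ⊓ K = ⊥ := by
    rw [eq_bot_iff, ← hdis]
    exact inf_le_inf_left _ hKX
  have hdisX : V ⊓ X = ⊥ := hdis
  constructor
  · refine lt_of_le_of_ne (sup_le_sup_right hKX _) ?_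
    intro heq
    have : K = X := sup_inj_of_disj hdis hKX le_rfl heq
    exact h.1.ne this
  · have h2 := h.2
    rw [finrank_sup_one hV hdisK, finrank_sup_one hV hdisX]
    omega

lemma IndFree.embed {n : ℕ} {V : Submodule ℝ (Fin n → ℝ)} (hV : finrank ℝ V = 1) :
    ∀ {X : Submodule ℝ (Fin n → ℝ)} {A : Finset (Submodule ℝ (Fin n → ℝ))} {e : Multiset ℕ},
    IndFree X A e → V ⊓ X = ⊥ → IndFree (X ⊔ V) (A.image fun K => K ⊔ V) (0 ::ₘ e) := by
  intro X A e h
  induction h with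
  | empty X =>
      intro hdis
      rw [Finset.image_empty]
      have he := IndFree.empty (n := n) (X ⊔ V)
      rw [finrank_sup_one hV hdis, Multiset.replicate_succ] at he
      exact he
  | add X A H e'' d hH hhyp h' h'' ih' ih'' =>
      intro hdis
      have hsubA : ∀ K ∈ A, K ≤ X := fun K hK => (hhyp K hK).1.le
      set F : Submodule ℝ (Fin n → ℝ) → Submodule ℝ (Fin n → ℝ) := fun K => K ⊔ V with hF
      have herase : (A.image F).erase (F H) = (A.erase H).image F := by
        ext K
        simp only [Finset.mem_erase, Finset.mem_image]
        constructor
        · rintro ⟨hne, K₀, hK₀, rfl⟩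
          refine ⟨K₀, ⟨?_, hK₀⟩, rfl⟩
          rintro rfl; exact hne rfl
        · rintro ⟨K₀, ⟨hne, hK₀⟩, rfl⟩
          refine ⟨?_, K₀, hK₀, rfl⟩
          intro heq
          exact hne (sup_inj_of_disj hdis (hsubA _ hK₀) (hsubA _ hH) heq)
      have hrest : restrictArr (A.image F) (F H) = (restrictArr A H).image F := by
        unfold restrictArr
        rw [herase, Finset.image_image, Finset.image_image]
        apply Finset.image_congr
        intro K hK
        rw [Finset.mem_coe, Finset.mem_erase] at hK
        simp only [Function.comp_apply, hF]
        exact sup_inf_sup_of_disj hdis (hsubA _ hH) (hsubA _ hK.2)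
      have hdisH : V ⊓ H = ⊥ := by
        rw [eq_bot_iff, ← hdis]
        exact inf_le_inf_left _ (hsubA _ hH)
      rw [Multiset.cons_swap]
      refine IndFree.add _ _ (F H) (0 ::ₘ e'') d (Finset.mem_image_of_mem F hH) ?_ ?_ ?_
      · intro K hK
        obtain ⟨K₀, hK₀, rfl⟩ := Finset.mem_image.1 hK
        exact isHypIn_sup hV hdis (hhyp K₀ hK₀)
      · rw [herase, Multiset.cons_swap]
        exact ih' hdis
      · rw [hrest]
        exact ih'' hdisH


end DrkAux
end CHUNK3

section CHUNK4
set_option maxHeartbeats 1000000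
set_option synthInstance.maxHeartbeats 200000
namespace DrkAux
variable {r : ℕ}

/-- shear map: adds `s * x a` to coordinate `m` -/
def shearMap (a m : Fin r) (s : ℝ) : (Fin r → ℝ) →ₗ[ℝ] (Fin r → ℝ) where
  toFun x := fun t => x t + (if t = m then s * x a else 0)
  map_add' x y := by
    funext t
    by_cases h : t = m <;> simp [h] <;> ring
  map_smul' c x := by
    funext t
    by_cases h : t = m <;> simp [h] <;> ring

lemma shearMap_apply (a m : Fin r) (s : ℝ) (x : Fin r → ℝ) (t : Fin r) :
    shearMap a m s x t = x t + (if t = m then s * x a else 0) := rfl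

noncomputable def shear (a m : Fin r) (ham : a ≠ m) (s : ℝ) :
    (Fin r → ℝ) ≃ₗ[ℝ] (Fin r → ℝ) :=
  LinearEquiv.ofLinear (shearMap a m s) (shearMap a m (-s))
    (by
      ext x t
      simp only [LinearMap.comp_apply, shearMap_apply, LinearMap.id_apply]
      by_cases h : t = m
      · subst h
        rw [if_pos rfl, if_pos rfl, if_neg ham]
        ring
      · simp [h])
    (by
      ext x t
      simp only [LinearMap.comp_apply, shearMap_apply, LinearMap.id_apply]
      by_cases h : t = m
      · subst h
        rw [if_pos rfl, if_pos rfl, if_neg ham]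
        ring
      · simp [h])

lemma shear_symm_apply (a m : Fin r) (ham : a ≠ m) (s : ℝ) (x : Fin r → ℝ) (t : Fin r) :
    (shear a m ham s).symm x t = x t + (if t = m then -s * x a else 0) := by
  simp [shear, LinearEquiv.ofLinear_symm_apply, shearMap_apply, neg_mul]

/-- master lemma: the shear carries `XL L' ⊓ ker g` to `pairHyp (insert m L') a m s ⊓ ker g`
for functionals `g` that do not involve coordinate `m`. -/
lemma map_shear_inf_ker {L' : Finset (Fin r)} {a m : Fin r} (ha : a ∈ L') (hm : m ∉ L')
    (ham : a ≠ m) {s : ℝ} (hs : s * s = 1) (g : (Fin r → ℝ) →ₗ[ℝ] ℝ)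
    (hg : ∀ (x : Fin r → ℝ) (c : ℝ), g (fun t => x t + (if t = m then c else 0)) = g x) :
    Submodule.map ((shear a m ham s : (Fin r → ℝ) ≃ₗ[ℝ] (Fin r → ℝ)) :
        (Fin r → ℝ) →ₗ[ℝ] (Fin r → ℝ)) (XL L' ⊓ LinearMap.ker g) =
      pairHyp (insert m L') a m s ⊓ LinearMap.ker g := by
  ext y
  rw [Submodule.mem_map_equiv]
  simp only [Submodule.mem_inf, mem_XL, LinearMap.mem_ker, mem_pairHyp]
  have hsymm : ∀ t, (shear a m ham s).symm y t = y t + (if t = m then -s * y a else 0) :=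
    shear_symm_apply a m ham s y
  have hgy : g ((shear a m ham s).symm y) = g y := by
    have : ((shear a m ham s).symm y) = fun t => y t + (if t = m then -s * y a else 0) :=
      funext hsymm
    rw [this, hg]
  constructor
  · rintro ⟨hX, hker⟩
    have hym : y m = s * y a := by
      have h0 := hX m hm
      rw [hsymm m, if_pos rfl] at h0
      linarith
    refine ⟨⟨?_, ?_⟩, by rwa [hgy] at hker⟩
    · intro t ht
      simp only [Finset.mem_insert, not_or] at ht
      have h0 := hX t ht.2
      rwa [hsymm t, if_neg ht.1, add_zero] at h0
    · rw [hym, ← mul_assoc, hs, one_mul]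
  · rintro ⟨⟨hXy, hpair⟩, hker⟩
    refine ⟨?_, by rwa [hgy]⟩
    intro t ht
    rw [hsymm t]
    by_cases htm : t = m
    · subst htm
      rw [if_pos rfl, hpair, show -s * (s * y t) = -(s * s) * y t by ring, hs]
      ring
    · rw [if_neg htm, add_zero]
      exact hXy t (by simp [Finset.mem_insert, htm, ht])

end DrkAux
end CHUNK4

section CHUNK5
set_option maxHeartbeats 1000000
set_option synthInstance.maxHeartbeats 200000
namespace DrkAux
variable {r : ℕ}

/-- the pair functional -/
noncomputable abbrev gP (i j : Fin r) (s : ℝ) : (Fin r → ℝ) →ₗ[ℝ] ℝ :=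
  (LinearMap.proj i : (Fin r → ℝ) →ₗ[ℝ] ℝ) - s • (LinearMap.proj j : (Fin r → ℝ) →ₗ[ℝ] ℝ)

noncomputable abbrev gZ (i : Fin r) : (Fin r → ℝ) →ₗ[ℝ] ℝ :=
  (LinearMap.proj i : (Fin r → ℝ) →ₗ[ℝ] ℝ)

lemma gP_apply (i j : Fin r) (s : ℝ) (x : Fin r → ℝ) : gP i j s x = x i - s * x j := by
  simp [LinearMap.proj_apply]

lemma gZ_apply (i : Fin r) (x : Fin r → ℝ) : gZ i x = x i := rfl

lemma pairHyp_def (L : Finset (Fin r)) (i j : Fin r) (s : ℝ) :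
    pairHyp L i j s = XL L ⊓ LinearMap.ker (gP i j s) := rfl

lemma zeroHyp_def (L : Finset (Fin r)) (i : Fin r) :
    zeroHyp L i = XL L ⊓ LinearMap.ker (gZ i) := rfl

lemma inf_ker_congr {H : Submodule ℝ (Fin r → ℝ)} {f g : (Fin r → ℝ) →ₗ[ℝ] ℝ}
    (h : ∀ x ∈ H, (f x = 0 ↔ g x = 0)) :
    H ⊓ LinearMap.ker f = H ⊓ LinearMap.ker g := by
  ext x
  simp only [Submodule.mem_inf, LinearMap.mem_ker]
  exact and_congr_right fun hx => h x hx

lemma inf_XL_collapse {L : Finset (Fin r)} {H : Submodule ℝ (Fin r → ℝ)} (hH : H ≤ XL L)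
    (g : (Fin r → ℝ) →ₗ[ℝ] ℝ) : H ⊓ (XL L ⊓ LinearMap.ker g) = H ⊓ LinearMap.ker g := by
  rw [← inf_assoc, inf_eq_left.2 hH]

lemma pairHyp_le {L : Finset (Fin r)} {i j : Fin r} {s : ℝ} : pairHyp L i j s ≤ XL L :=
  inf_le_left

lemma zeroHyp_le {L : Finset (Fin r)} {i : Fin r} : zeroHyp L i ≤ XL L := inf_le_left

lemma mem_H_rel {L : Finset (Fin r)} {a m : Fin r} {s : ℝ} (hs : s * s = 1)
    {x : Fin r → ℝ} (hx : x ∈ pairHyp L a m s) : x m = s * x a := by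
  rw [mem_pairHyp] at hx
  rw [hx.2, ← mul_assoc, hs, one_mul]

lemma hg_pair {m i j : Fin r} (hi : i ≠ m) (hj : j ≠ m) (s' : ℝ) (x : Fin r → ℝ) (c : ℝ) :
    gP i j s' (fun t => x t + (if t = m then c else 0)) = gP i j s' x := by
  rw [gP_apply, gP_apply]
  simp [hi, hj]

lemma hg_zero {m i : Fin r} (hi : i ≠ m) (x : Fin r → ℝ) (c : ℝ) :
    gZ i (fun t => x t + (if t = m then c else 0)) = gZ i x := by
  rw [gZ_apply, gZ_apply]
  simp [hi]

variable {L' : Finset (Fin r)} {a m : Fin r}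

/-- I1 -/
lemma map_shear_pair (ha : a ∈ L') (hm : m ∉ L') (ham : a ≠ m) {s : ℝ} (hs : s * s = 1)
    {i j : Fin r} (hi : i ∈ L') (hj : j ∈ L') (s' : ℝ) :
    Submodule.map ((shear a m ham s : (Fin r → ℝ) ≃ₗ[ℝ] (Fin r → ℝ)) :
        (Fin r → ℝ) →ₗ[ℝ] (Fin r → ℝ)) (pairHyp L' i j s') =
      pairHyp (insert m L') a m s ⊓ pairHyp (insert m L') i j s' := by
  have him : i ≠ m := fun h => hm (h ▸ hi)
  have hjm : j ≠ m := fun h => hm (h ▸ hj)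
  rw [pairHyp_def L', pairHyp_def (insert m L') i,
    map_shear_inf_ker ha hm ham hs _ (hg_pair him hjm s'),
    inf_XL_collapse (show pairHyp (insert m L') a m s ≤ XL (insert m L') from pairHyp_le)]

/-- I2 -/
lemma map_shear_zero (ha : a ∈ L') (hm : m ∉ L') (ham : a ≠ m) {s : ℝ} (hs : s * s = 1)
    {i : Fin r} (hi : i ∈ L') :
    Submodule.map ((shear a m ham s : (Fin r → ℝ) ≃ₗ[ℝ] (Fin r → ℝ)) :
        (Fin r → ℝ) →ₗ[ℝ] (Fin r → ℝ)) (zeroHyp L' i) =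
      pairHyp (insert m L') a m s ⊓ zeroHyp (insert m L') i := by
  have him : i ≠ m := fun h => hm (h ▸ hi)
  rw [zeroHyp_def L', zeroHyp_def (insert m L'),
    map_shear_inf_ker ha hm ham hs _ (hg_zero him),
    inf_XL_collapse (show pairHyp (insert m L') a m s ≤ XL (insert m L') from pairHyp_le)]

/-- I3/I4 -/
lemma map_shear_edge (ha : a ∈ L') (hm : m ∉ L') (ham : a ≠ m) {s : ℝ} (hs : s * s = 1)
    {j : Fin r} (hj : j ∈ L') (hja : j ≠ a) (s' s'' : ℝ) (hprod : s'' = s' * s) :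
    Submodule.map ((shear a m ham s : (Fin r → ℝ) ≃ₗ[ℝ] (Fin r → ℝ)) :
        (Fin r → ℝ) →ₗ[ℝ] (Fin r → ℝ)) (pairHyp L' j a s'') =
      pairHyp (insert m L') a m s ⊓ pairHyp (insert m L') j m s' := by
  subst hprod
  have hjm : j ≠ m := fun h => hm (h ▸ hj)
  rw [pairHyp_def L', pairHyp_def (insert m L') j,
    map_shear_inf_ker ha hm ham hs _ (hg_pair hjm ham (s' * s)),
    inf_XL_collapse (show pairHyp (insert m L') a m s ≤ XL (insert m L') from pairHyp_le)]
  apply inf_ker_congr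
  intro x hx
  have hxm : x m = s * x a := mem_H_rel hs hx
  rw [gP_apply, gP_apply, hxm]
  constructor <;> intro h <;> nlinarith [h]

/-- I5 -/
lemma map_shear_opp (ha : a ∈ L') (hm : m ∉ L') (ham : a ≠ m) {s s' : ℝ} (hs : s * s = 1)
    (hss' : s' * s = -1) :
    Submodule.map ((shear a m ham s : (Fin r → ℝ) ≃ₗ[ℝ] (Fin r → ℝ)) :
        (Fin r → ℝ) →ₗ[ℝ] (Fin r → ℝ)) (zeroHyp L' a) =
      pairHyp (insert m L') a m s ⊓ pairHyp (insert m L') a m s' := by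
  rw [zeroHyp_def L', pairHyp_def (insert m L') a m s',
    map_shear_inf_ker ha hm ham hs _ (hg_zero ham),
    inf_XL_collapse (show pairHyp (insert m L') a m s ≤ XL (insert m L') from pairHyp_le)]
  apply inf_ker_congr
  intro x hx
  have hxm : x m = s * x a := mem_H_rel hs hx
  rw [gZ_apply, gP_apply, hxm]
  constructor <;> intro h <;> nlinarith [h]

lemma map_shear_XL (ha : a ∈ L') (hm : m ∉ L') (ham : a ≠ m) {s : ℝ} (hs : s * s = 1) :
    Submodule.map ((shear a m ham s : (Fin r → ℝ) ≃ₗ[ℝ] (Fin r → ℝ)) :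
        (Fin r → ℝ) →ₗ[ℝ] (Fin r → ℝ)) (XL L') = pairHyp (insert m L') a m s := by
  have h0 : ∀ (x : Fin r → ℝ) (c : ℝ),
      (0 : (Fin r → ℝ) →ₗ[ℝ] ℝ) (fun t => x t + (if t = m then c else 0)) =
      (0 : (Fin r → ℝ) →ₗ[ℝ] ℝ) x := fun x c => rfl
  have h := map_shear_inf_ker ha hm ham hs (0 : (Fin r → ℝ) →ₗ[ℝ] ℝ) h0
  rwa [LinearMap.ker_zero, inf_top_eq, inf_top_eq] at h

/-- J0 -/
lemma zeroHyp_insert_eq_XL (hm : m ∉ L') : zeroHyp (insert m L') m = XL L' := by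
  ext x
  rw [mem_zeroHyp, mem_XL, mem_XL]
  constructor
  · rintro ⟨h1, h2⟩ t ht
    by_cases htm : t = m
    · subst htm; exact h2
    · exact h1 t (by simp [htm, ht])
  · intro h
    exact ⟨fun t ht => h t fun htL => ht (Finset.mem_insert_of_mem htL), h m hm⟩

/-- J1 -/
lemma XL_inf_pair (hm : m ∉ L') {i j : Fin r} {s : ℝ} (hi : i ∈ L') (hj : j ∈ L') :
    XL L' ⊓ pairHyp (insert m L') i j s = pairHyp L' i j s := by
  rw [pairHyp_def (insert m L'), pairHyp_def L',
    inf_XL_collapse (XL_mono (Finset.subset_insert m L'))]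

/-- J2 -/
lemma XL_inf_zero (hm : m ∉ L') {i : Fin r} (hi : i ∈ L') :
    XL L' ⊓ zeroHyp (insert m L') i = zeroHyp L' i := by
  rw [zeroHyp_def (insert m L'), zeroHyp_def L',
    inf_XL_collapse (XL_mono (Finset.subset_insert m L'))]

/-- J3 : edge `(i, m, s)` meets the flat `x_m = 0` in the zero hyperplane at `i` -/
lemma XL_inf_edge (hm : m ∉ L') {i : Fin r} (hi : i ∈ L') (s : ℝ) :
    XL L' ⊓ pairHyp (insert m L') i m s = zeroHyp L' i := by
  rw [pairHyp_def (insert m L'), zeroHyp_def L',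
    inf_XL_collapse (XL_mono (Finset.subset_insert m L'))]
  apply inf_ker_congr
  intro x hx
  have hxm : x m = 0 := hx m hm
  rw [gP_apply, gZ_apply, hxm]
  constructor <;> intro h <;> linarith

/-- J4 : edge `(m, i, s)`, `s ≠ 0` -/
lemma XL_inf_edge' (hm : m ∉ L') {i : Fin r} (hi : i ∈ L') {s : ℝ} (hs : s ≠ 0) :
    XL L' ⊓ pairHyp (insert m L') m i s = zeroHyp L' i := by
  rw [pairHyp_def (insert m L'), zeroHyp_def L',
    inf_XL_collapse (XL_mono (Finset.subset_insert m L'))]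
  apply inf_ker_congr
  intro x hx
  have hxm : x m = 0 := hx m hm
  rw [gP_apply, gZ_apply, hxm]
  constructor
  · intro h
    have : s * x i = 0 := by linarith
    exact (mul_eq_zero.1 this).resolve_left hs
  · intro h
    rw [h]; ring

/-- pair symmetry -/
lemma pairHyp_comm {L : Finset (Fin r)} {i j : Fin r} {s : ℝ} (hs : s * s = 1) :
    pairHyp L i j s = pairHyp L j i s := by
  rw [pairHyp_def, pairHyp_def]
  apply inf_ker_congr
  intro x _
  rw [gP_apply, gP_apply]
  constructor
  · intro h; linear_combination (-s) * h - x j * hs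
  · intro h; linear_combination (-s) * h - x i * hs

end DrkAux
end CHUNK5

section CHUNK6
set_option maxHeartbeats 1000000
set_option synthInstance.maxHeartbeats 200000
namespace DrkAux
variable {r : ℕ}

lemma pow3_inj {i j : ℕ} (h : (3:ℝ)^i = (3:ℝ)^j) : i = j := by
  have h2 : ((3^i : ℕ) : ℝ) = ((3^j : ℕ) : ℝ) := by push_cast; exact h
  exact Nat.pow_right_injective (by norm_num) (Nat.cast_injective h2)

lemma pow3_pos (i : ℕ) : (0:ℝ) < 3^i := by positivity

/-- witness vector: `c` at coordinate `m`, `3^t` on `L'`, `0` elsewhere -/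
noncomputable def wit (L' : Finset (Fin r)) (m : Fin r) (c : ℝ) : Fin r → ℝ :=
  fun t => if t = m then c else if t ∈ L' then 3 ^ (t : ℕ) else 0

lemma wit_mem_XL {L' : Finset (Fin r)} {m : Fin r} {c : ℝ} :
    wit L' m c ∈ XL (insert m L') := by
  intro t ht
  simp only [Finset.mem_insert, not_or] at ht
  simp [wit, ht.1, ht.2]

lemma wit_apply_mem {L' : Finset (Fin r)} {m t : Fin r} (hm : m ∉ L') (ht : t ∈ L') {c : ℝ} :
    wit L' m c t = 3 ^ (t : ℕ) := by
  have : t ≠ m := fun h => hm (h ▸ ht)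
  simp [wit, this, ht]

lemma wit_apply_m {L' : Finset (Fin r)} {m : Fin r} {c : ℝ} : wit L' m c m = c := by
  simp [wit]

lemma sign_cases {s : ℝ} (hs : s = 1 ∨ s = -1) : s * s = 1 := by
  rcases hs with rfl | rfl <;> norm_num

/-- the witness is not in any pair hyperplane with both indices in `L'` -/
lemma wit_not_mem_pair {L' Lau : Finset (Fin r)} {m i j : Fin r} (hm : m ∉ L')
    (hi : i ∈ L') (hj : j ∈ L') (hij : i ≠ j) {s' : ℝ} (hs' : s' = 1 ∨ s' = -1) {c : ℝ} :
    wit L' m c ∉ pairHyp Lau i j s' := by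
  rw [mem_pairHyp]
  rintro ⟨-, hrel⟩
  rw [wit_apply_mem hm hi, wit_apply_mem hm hj] at hrel
  rcases hs' with rfl | rfl
  · rw [one_mul] at hrel
    exact hij (Fin.val_injective (pow3_inj hrel))
  · have := pow3_pos (i : ℕ)
    have := pow3_pos (j : ℕ)
    nlinarith [hrel]

lemma wit_not_mem_zero {L' Lau : Finset (Fin r)} {m i : Fin r} (hm : m ∉ L')
    (hi : i ∈ L') {c : ℝ} : wit L' m c ∉ zeroHyp Lau i := by
  rw [mem_zeroHyp]
  rintro ⟨-, hrel⟩
  rw [wit_apply_mem hm hi] at hrel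
  exact absurd hrel (ne_of_gt (pow3_pos _))

/-- the witness with `c = s * 3^a` is in the edge hyperplane `(a, m, s)` -/
lemma wit_mem_edge {L' : Finset (Fin r)} {m a : Fin r} (hm : m ∉ L') (ha : a ∈ L')
    {s : ℝ} (hs : s = 1 ∨ s = -1) :
    wit L' m (s * 3 ^ (a : ℕ)) ∈ pairHyp (insert m L') a m s := by
  rw [mem_pairHyp]
  refine ⟨wit_mem_XL, ?_⟩
  rw [wit_apply_mem hm ha, wit_apply_m, ← mul_assoc, sign_cases hs, one_mul]

/-- ...and in no other edge hyperplane `(j, m, s')` -/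
lemma wit_not_mem_edge {L' Lau : Finset (Fin r)} {m a j : Fin r} (hm : m ∉ L') (ha : a ∈ L')
    (hj : j ∈ L') {s s' : ℝ} (hs : s = 1 ∨ s = -1) (hs' : s' = 1 ∨ s' = -1)
    (hne : j ≠ a ∨ s' ≠ s) :
    wit L' m (s * 3 ^ (a : ℕ)) ∉ pairHyp Lau j m s' := by
  rw [mem_pairHyp]
  rintro ⟨-, hrel⟩
  rw [wit_apply_mem hm hj, wit_apply_m] at hrel
  have hja : j ≠ a ∨ s' * s ≠ 1 := by
    rcases hne with h | h
    · exact Or.inl h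
    · right
      rcases hs with rfl | rfl <;> rcases hs' with rfl | rfl <;> norm_num <;> simp_all
  have hp := pow3_pos (j : ℕ)
  have hpa := pow3_pos (a : ℕ)
  rcases hs with rfl | rfl <;> rcases hs' with rfl | rfl
  · simp only [one_mul] at hrel
    rcases hja with h | h
    · exact h (Fin.val_injective (pow3_inj hrel))
    · exact h (by norm_num)
  · nlinarith [hrel]
  · nlinarith [hrel]
  · have : (3:ℝ) ^ (j:ℕ) = 3 ^ (a:ℕ) := by nlinarith [hrel]
    rcases hja with h | h
    · exact h (Fin.val_injective (pow3_inj this))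
    · exact h (by norm_num)

/-- witness for phase 6 : zero at `m`, in no pair/zero/edge hyperplane over `L'` -/
lemma wit0_mem_zeroHyp {L' : Finset (Fin r)} {m : Fin r} :
    wit L' m 0 ∈ zeroHyp (insert m L') m := by
  rw [mem_zeroHyp]
  exact ⟨wit_mem_XL, wit_apply_m⟩

lemma wit0_not_mem_edge {L' Lau : Finset (Fin r)} {m j : Fin r} (hm : m ∉ L') (hj : j ∈ L')
    (s' : ℝ) : wit L' m 0 ∉ pairHyp Lau j m s' := by
  rw [mem_pairHyp]
  rintro ⟨-, hrel⟩
  rw [wit_apply_mem hm hj, wit_apply_m, mul_zero] at hrel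
  exact absurd hrel (ne_of_gt (pow3_pos _))

lemma wit0_not_mem_edge' {L' Lau : Finset (Fin r)} {m j : Fin r} (hm : m ∉ L') (hj : j ∈ L')
    {s' : ℝ} (hs' : s' ≠ 0) : wit L' m 0 ∉ pairHyp Lau m j s' := by
  rw [mem_pairHyp]
  rintro ⟨-, hrel⟩
  rw [wit_apply_mem hm hj, wit_apply_m] at hrel
  have := pow3_pos (j : ℕ)
  rcases mul_eq_zero.1 hrel.symm with h | h
  · exact hs' h
  · linarith

end DrkAux
end CHUNK6

section CHUNK7
set_option maxHeartbeats 1000000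
set_option synthInstance.maxHeartbeats 200000
namespace DrkAux
variable {r : ℕ} {L' Z T S : Finset (Fin r)} {m a : Fin r}

lemma mem_PartA {K : Submodule ℝ (Fin r → ℝ)} :
    K ∈ PartA L' Z T S m ↔ K ∈ FullA L' Z (insert m L') ∨
      (∃ i ∈ T, K = pairHyp (insert m L') i m 1) ∨
      (∃ i ∈ S, K = pairHyp (insert m L') i m (-1)) := by
  simp only [PartA, Finset.mem_union, Finset.mem_image]
  constructor
  · rintro ((h | ⟨i, hi, rfl⟩) | ⟨i, hi, rfl⟩)
    · exact Or.inl h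
    · exact Or.inr (Or.inl ⟨i, hi, rfl⟩)
    · exact Or.inr (Or.inr ⟨i, hi, rfl⟩)
  · rintro (h | ⟨i, hi, rfl⟩ | ⟨i, hi, rfl⟩)
    · exact Or.inl (Or.inl h)
    · exact Or.inl (Or.inr ⟨i, hi, rfl⟩)
    · exact Or.inr ⟨i, hi, rfl⟩

lemma PartA_empty : PartA L' Z ∅ ∅ m = FullA L' Z (insert m L') := by
  simp [PartA]

lemma PartA_insert_T (haT : a ∉ T) :
    PartA L' Z (insert a T) ∅ m = insert (pairHyp (insert m L') a m 1) (PartA L' Z T ∅ m) := by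
  simp only [PartA, Finset.image_insert, Finset.image_empty, Finset.union_empty,
    Finset.union_insert]

lemma PartA_insert_S (haS : a ∉ S) :
    PartA L' Z T (insert a S) m =
      insert (pairHyp (insert m L') a m (-1)) (PartA L' Z T S m) := by
  simp only [PartA, Finset.image_insert, Finset.union_insert]

lemma FullA_insert_zero {P L : Finset (Fin r)} {i : Fin r} :
    FullA P (insert i Z) L = insert (zeroHyp L i) (FullA P Z L) := by
  simp only [FullA, Finset.image_insert, Finset.union_insert]

/-- the completed chain equals the full arrangement -/
lemma PartA_full (hm : m ∉ L') :
    PartA L' Z L' L' m = FullA (insert m L') Z (insert m L') := by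
  ext K
  rw [mem_PartA, mem_FullA, mem_FullA]
  constructor
  · rintro (h | ⟨i, hi, rfl⟩ | ⟨i, hi, rfl⟩)
    · rcases h with ⟨i, j, hi, hj, hij, hK⟩ | hz
      · exact Or.inl ⟨i, j, Finset.mem_insert_of_mem hi, Finset.mem_insert_of_mem hj, hij, hK⟩
      · exact Or.inr hz
    · exact Or.inl ⟨i, m, Finset.mem_insert_of_mem hi, Finset.mem_insert_self m L',
        fun h => hm (by rwa [h] at hi), Or.inl rfl⟩
    · exact Or.inl ⟨i, m, Finset.mem_insert_of_mem hi, Finset.mem_insert_self m L',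
        fun h => hm (by rwa [h] at hi), Or.inr rfl⟩
  · rintro (⟨i, j, hi, hj, hij, hK⟩ | hz)
    · rw [Finset.mem_insert] at hi hj
      rcases hi with rfl | hi
      · -- i = m, so j ∈ L'
        rcases hj with rfl | hj
        · exact absurd rfl hij
        · rcases hK with rfl | rfl
          · exact Or.inr (Or.inl ⟨j, hj, pairHyp_comm (by norm_num)⟩)
          · exact Or.inr (Or.inr ⟨j, hj, pairHyp_comm (by norm_num)⟩)
      · rcases hj with rfl | hj
        · rcases hK with rfl | rfl
          · exact Or.inr (Or.inl ⟨i, hi, rfl⟩)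
          · exact Or.inr (Or.inr ⟨i, hi, rfl⟩)
        · exact Or.inl (Or.inl ⟨i, j, hi, hj, hij, hK⟩)
    · exact Or.inl (Or.inr hz)

lemma hyp_all_FullA {P Z L : Finset (Fin r)} (hP : P ⊆ L) (hZ : Z ⊆ L) :
    ∀ K ∈ FullA P Z L, IsHypIn (XL L) K := by
  intro K hK
  rw [mem_FullA] at hK
  rcases hK with ⟨i, j, hi, hj, hij, (rfl | rfl)⟩ | ⟨i, hi, rfl⟩
  · exact isHypIn_pairHyp (hP hi) hij _
  · exact isHypIn_pairHyp (hP hi) hij _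
  · exact isHypIn_zeroHyp (hZ hi)

lemma hyp_all_PartA (hm : m ∉ L') (hZ : Z ⊆ L') (hT : T ⊆ L') (hS : S ⊆ L') :
    ∀ K ∈ PartA L' Z T S m, IsHypIn (XL (insert m L')) K := by
  intro K hK
  rw [mem_PartA] at hK
  rcases hK with hF | ⟨i, hi, rfl⟩ | ⟨i, hi, rfl⟩
  · exact hyp_all_FullA (fun x hx => Finset.mem_insert_of_mem hx)
      (fun x hx => Finset.mem_insert_of_mem (hZ hx)) K hF
  · exact isHypIn_pairHyp (Finset.mem_insert_of_mem (hT hi))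
      (fun h => hm (by rw [← h]; exact hT hi)) _
  · exact isHypIn_pairHyp (Finset.mem_insert_of_mem (hS hi))
      (fun h => hm (by rw [← h]; exact hS hi)) _

/-- D1 -/
lemma plus_not_mem (hm : m ∉ L') (hZ : Z ⊆ L') (hT : T ⊆ L') (ha : a ∈ L') (haT : a ∉ T) :
    pairHyp (insert m L') a m 1 ∉ PartA L' Z T ∅ m := by
  intro hmem
  have hw := wit_mem_edge hm ha (Or.inl rfl)
  rw [mem_PartA] at hmem
  rcases hmem with hF | ⟨i, hiT, heq⟩ | ⟨i, hiS, heq⟩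
  · rw [mem_FullA] at hF
    rcases hF with ⟨i, j, hi, hj, hij, (heq | heq)⟩ | ⟨i, hi, heq⟩
    · exact wit_not_mem_pair hm hi hj hij (Or.inl rfl) (heq ▸ hw)
    · exact wit_not_mem_pair hm hi hj hij (Or.inr rfl) (heq ▸ hw)
    · exact wit_not_mem_zero hm (hZ hi) (heq ▸ hw)
  · exact wit_not_mem_edge hm ha (hT hiT) (Or.inl rfl) (Or.inl rfl)
      (Or.inl fun h => haT (h ▸ hiT)) (heq ▸ hw)
  · exact absurd hiS (Finset.notMem_empty i)

/-- D2 -/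
lemma minus_not_mem (hm : m ∉ L') (hZ : Z ⊆ L') (hS : S ⊆ L') (ha : a ∈ L') (haS : a ∉ S) :
    pairHyp (insert m L') a m (-1) ∉ PartA L' Z L' S m := by
  intro hmem
  have hw := wit_mem_edge hm ha (Or.inr rfl)
  rw [mem_PartA] at hmem
  rcases hmem with hF | ⟨i, hiT, heq⟩ | ⟨i, hiS, heq⟩
  · rw [mem_FullA] at hF
    rcases hF with ⟨i, j, hi, hj, hij, (heq | heq)⟩ | ⟨i, hi, heq⟩
    · exact wit_not_mem_pair hm hi hj hij (Or.inl rfl) (heq ▸ hw)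
    · exact wit_not_mem_pair hm hi hj hij (Or.inr rfl) (heq ▸ hw)
    · exact wit_not_mem_zero hm (hZ hi) (heq ▸ hw)
  · exact wit_not_mem_edge hm ha hiT (Or.inr rfl) (Or.inl rfl)
      (Or.inr (by norm_num)) (heq ▸ hw)
  · exact wit_not_mem_edge hm ha (hS hiS) (Or.inr rfl) (Or.inr rfl)
      (Or.inl fun h => haS (h ▸ hiS)) (heq ▸ hw)

/-- D3 -/
lemma zero_not_mem (hm : m ∉ L') (hZ : Z ⊆ L') :
    zeroHyp (insert m L') m ∉ FullA (insert m L') Z (insert m L') := by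
  intro hmem
  have hw := wit0_mem_zeroHyp (L' := L') (m := m)
  rw [mem_FullA] at hmem
  rcases hmem with ⟨i, j, hi, hj, hij, hK⟩ | ⟨i, hi, heq⟩
  · rw [Finset.mem_insert] at hi hj
    rcases hi with rfl | hi
    · rcases hj with rfl | hj
      · exact absurd rfl hij
      · rcases hK with heq | heq
        · exact wit0_not_mem_edge' hm hj (by norm_num) (heq ▸ hw)
        · exact wit0_not_mem_edge' hm hj (by norm_num) (heq ▸ hw)
    · rcases hj with rfl | hj
      · rcases hK with heq | heq
        · exact wit0_not_mem_edge hm hi _ (heq ▸ hw)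
        · exact wit0_not_mem_edge hm hi _ (heq ▸ hw)
      · rcases hK with heq | heq
        · exact wit_not_mem_pair hm hi hj hij (Or.inl rfl) (heq ▸ hw)
        · exact wit_not_mem_pair hm hi hj hij (Or.inr rfl) (heq ▸ hw)
  · exact wit_not_mem_zero hm (hZ hi) (heq ▸ hw)

end DrkAux
end CHUNK7

section CHUNK8
set_option maxHeartbeats 1000000
set_option synthInstance.maxHeartbeats 200000
namespace DrkAux
variable {r : ℕ} {L' Z T S : Finset (Fin r)} {m a : Fin r}

lemma restrict_plus (hm : m ∉ L') (ha : a ∈ L') (ham : a ≠ m) (hZ : Z ⊆ L')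
    (hT : T ⊆ L') (haT : a ∉ T) :
    (PartA L' Z T ∅ m).image (fun K => pairHyp (insert m L') a m 1 ⊓ K) =
      (FullA L' Z L').image (fun K => Submodule.map
        ((shear a m ham 1 : (Fin r → ℝ) ≃ₗ[ℝ] (Fin r → ℝ)) :
          (Fin r → ℝ) →ₗ[ℝ] (Fin r → ℝ)) K) := by
  have hs : (1:ℝ) * 1 = 1 := by norm_num
  ext K
  simp only [Finset.mem_image]
  constructor
  · rintro ⟨K₀, hK₀, rfl⟩
    rw [mem_PartA] at hK₀
    rcases hK₀ with hF | ⟨i, hiT, rfl⟩ | ⟨i, hiS, rfl⟩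
    · rw [mem_FullA] at hF
      rcases hF with ⟨i, j, hi, hj, hij, (rfl | rfl)⟩ | ⟨i, hi, rfl⟩
      · exact ⟨pairHyp L' i j 1,
          mem_FullA.2 (Or.inl ⟨i, j, hi, hj, hij, Or.inl rfl⟩),
          map_shear_pair ha hm ham hs hi hj 1⟩
      · exact ⟨pairHyp L' i j (-1),
          mem_FullA.2 (Or.inl ⟨i, j, hi, hj, hij, Or.inr rfl⟩),
          map_shear_pair ha hm ham hs hi hj (-1)⟩
      · exact ⟨zeroHyp L' i, mem_FullA.2 (Or.inr ⟨i, hi, rfl⟩),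
          map_shear_zero ha hm ham hs (hZ hi)⟩
    · have hia : i ≠ a := fun h => haT (h ▸ hiT)
      exact ⟨pairHyp L' i a 1,
        mem_FullA.2 (Or.inl ⟨i, a, hT hiT, ha, hia, Or.inl rfl⟩),
        map_shear_edge ha hm ham hs (hT hiT) hia 1 1 (by norm_num)⟩
    · exact absurd hiS (Finset.notMem_empty i)
  · rintro ⟨K₀, hK₀, rfl⟩
    rw [mem_FullA] at hK₀
    rcases hK₀ with ⟨i, j, hi, hj, hij, (rfl | rfl)⟩ | ⟨i, hi, rfl⟩
    · exact ⟨pairHyp (insert m L') i j 1,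
        mem_PartA.2 (Or.inl (mem_FullA.2 (Or.inl ⟨i, j, hi, hj, hij, Or.inl rfl⟩))),
        (map_shear_pair ha hm ham hs hi hj 1).symm⟩
    · exact ⟨pairHyp (insert m L') i j (-1),
        mem_PartA.2 (Or.inl (mem_FullA.2 (Or.inl ⟨i, j, hi, hj, hij, Or.inr rfl⟩))),
        (map_shear_pair ha hm ham hs hi hj (-1)).symm⟩
    · exact ⟨zeroHyp (insert m L') i,
        mem_PartA.2 (Or.inl (mem_FullA.2 (Or.inr ⟨i, hi, rfl⟩))),
        (map_shear_zero ha hm ham hs (hZ hi)).symm⟩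

lemma restrict_minus (hm : m ∉ L') (ha : a ∈ L') (ham : a ≠ m) (hZ : Z ⊆ L')
    (hS : S ⊆ L') (haS : a ∉ S) :
    (PartA L' Z L' S m).image (fun K => pairHyp (insert m L') a m (-1) ⊓ K) =
      (FullA L' (insert a Z) L').image (fun K => Submodule.map
        ((shear a m ham (-1) : (Fin r → ℝ) ≃ₗ[ℝ] (Fin r → ℝ)) :
          (Fin r → ℝ) →ₗ[ℝ] (Fin r → ℝ)) K) := by
  have hs : (-1:ℝ) * (-1) = 1 := by norm_num
  ext K
  simp only [Finset.mem_image]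
  constructor
  · rintro ⟨K₀, hK₀, rfl⟩
    rw [mem_PartA] at hK₀
    rcases hK₀ with hF | ⟨i, hiT, rfl⟩ | ⟨i, hiS, rfl⟩
    · rw [mem_FullA] at hF
      rcases hF with ⟨i, j, hi, hj, hij, (rfl | rfl)⟩ | ⟨i, hi, rfl⟩
      · exact ⟨pairHyp L' i j 1,
          mem_FullA.2 (Or.inl ⟨i, j, hi, hj, hij, Or.inl rfl⟩),
          map_shear_pair ha hm ham hs hi hj 1⟩
      · exact ⟨pairHyp L' i j (-1),
          mem_FullA.2 (Or.inl ⟨i, j, hi, hj, hij, Or.inr rfl⟩),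
          map_shear_pair ha hm ham hs hi hj (-1)⟩
      · exact ⟨zeroHyp L' i, mem_FullA.2 (Or.inr ⟨i, Finset.mem_insert_of_mem hi, rfl⟩),
          map_shear_zero ha hm ham hs (hZ hi)⟩
    · rcases eq_or_ne i a with rfl | hia
      · exact ⟨zeroHyp L' i, mem_FullA.2 (Or.inr ⟨i, Finset.mem_insert_self i Z, rfl⟩),
          map_shear_opp ha hm ham hs (by norm_num)⟩
      · exact ⟨pairHyp L' i a (-1),
          mem_FullA.2 (Or.inl ⟨i, a, hiT, ha, hia, Or.inr rfl⟩),
          map_shear_edge ha hm ham hs hiT hia 1 (-1) (by norm_num)⟩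
    · have hia : i ≠ a := fun h => haS (h ▸ hiS)
      exact ⟨pairHyp L' i a 1,
        mem_FullA.2 (Or.inl ⟨i, a, hS hiS, ha, hia, Or.inl rfl⟩),
        map_shear_edge ha hm ham hs (hS hiS) hia (-1) 1 (by norm_num)⟩
  · rintro ⟨K₀, hK₀, rfl⟩
    rw [mem_FullA] at hK₀
    rcases hK₀ with ⟨i, j, hi, hj, hij, (rfl | rfl)⟩ | ⟨i, hi, rfl⟩
    · exact ⟨pairHyp (insert m L') i j 1,
        mem_PartA.2 (Or.inl (mem_FullA.2 (Or.inl ⟨i, j, hi, hj, hij, Or.inl rfl⟩))),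
        (map_shear_pair ha hm ham hs hi hj 1).symm⟩
    · exact ⟨pairHyp (insert m L') i j (-1),
        mem_PartA.2 (Or.inl (mem_FullA.2 (Or.inl ⟨i, j, hi, hj, hij, Or.inr rfl⟩))),
        (map_shear_pair ha hm ham hs hi hj (-1)).symm⟩
    · rw [Finset.mem_insert] at hi
      rcases hi with rfl | hi
      · exact ⟨pairHyp (insert m L') i m 1,
          mem_PartA.2 (Or.inr (Or.inl ⟨i, ha, rfl⟩)),
          (map_shear_opp ha hm ham hs (by norm_num)).symm⟩
      · exact ⟨zeroHyp (insert m L') i,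
          mem_PartA.2 (Or.inl (mem_FullA.2 (Or.inr ⟨i, hi, rfl⟩))),
          (map_shear_zero ha hm ham hs (hZ hi)).symm⟩

lemma restrict_zero_lem (hm : m ∉ L') (hZ : Z ⊆ L') :
    (FullA (insert m L') Z (insert m L')).image
        (fun K => zeroHyp (insert m L') m ⊓ K) = FullA L' L' L' := by
  ext K
  simp only [Finset.mem_image, zeroHyp_insert_eq_XL hm]
  constructor
  · rintro ⟨K₀, hK₀, rfl⟩
    rw [mem_FullA] at hK₀
    rw [mem_FullA]
    rcases hK₀ with ⟨i, j, hi, hj, hij, (rfl | rfl)⟩ | ⟨i, hi, rfl⟩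
    · rw [Finset.mem_insert] at hi hj
      rcases hi with rfl | hi
      · rcases hj with rfl | hj
        · exact absurd rfl hij
        · rw [XL_inf_edge' hm hj (by norm_num : (1:ℝ) ≠ 0)]
          exact Or.inr ⟨j, hj, rfl⟩
      · rcases hj with rfl | hj
        · rw [XL_inf_edge hm hi 1]
          exact Or.inr ⟨i, hi, rfl⟩
        · rw [XL_inf_pair hm hi hj]
          exact Or.inl ⟨i, j, hi, hj, hij, Or.inl rfl⟩
    · rw [Finset.mem_insert] at hi hj
      rcases hi with rfl | hi
      · rcases hj with rfl | hj
        · exact absurd rfl hij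
        · rw [XL_inf_edge' hm hj (by norm_num : (-1:ℝ) ≠ 0)]
          exact Or.inr ⟨j, hj, rfl⟩
      · rcases hj with rfl | hj
        · rw [XL_inf_edge hm hi (-1)]
          exact Or.inr ⟨i, hi, rfl⟩
        · rw [XL_inf_pair hm hi hj]
          exact Or.inl ⟨i, j, hi, hj, hij, Or.inr rfl⟩
    · rw [XL_inf_zero hm (hZ hi)]
      exact Or.inr ⟨i, hZ hi, rfl⟩
  · intro hK
    rw [mem_FullA] at hK
    rcases hK with ⟨i, j, hi, hj, hij, (rfl | rfl)⟩ | ⟨i, hi, rfl⟩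
    · exact ⟨pairHyp (insert m L') i j 1,
        mem_FullA.2 (Or.inl ⟨i, j, Finset.mem_insert_of_mem hi,
          Finset.mem_insert_of_mem hj, hij, Or.inl rfl⟩),
        XL_inf_pair hm hi hj⟩
    · exact ⟨pairHyp (insert m L') i j (-1),
        mem_FullA.2 (Or.inl ⟨i, j, Finset.mem_insert_of_mem hi,
          Finset.mem_insert_of_mem hj, hij, Or.inr rfl⟩),
        XL_inf_pair hm hi hj⟩
    · exact ⟨pairHyp (insert m L') i m 1,
        mem_FullA.2 (Or.inl ⟨i, m, Finset.mem_insert_of_mem hi,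
          Finset.mem_insert_self m L', fun h => hm (by rwa [h] at hi), Or.inl rfl⟩),
        XL_inf_edge hm hi 1⟩

end DrkAux
end CHUNK8

section CHUNK9
set_option maxHeartbeats 1000000
set_option synthInstance.maxHeartbeats 200000
namespace DrkAux
variable {r : ℕ} {L' Z : Finset (Fin r)} {m : Fin r}

lemma sup_single_ker (hm : m ∉ L') (g : (Fin r → ℝ) →ₗ[ℝ] ℝ)
    (hg : ∀ (x : Fin r → ℝ) (c : ℝ), g (fun t => x t + (if t = m then c else 0)) = g x) :
    (XL L' ⊓ LinearMap.ker g) ⊔ Submodule.span ℝ {(Pi.single m 1 : Fin r → ℝ)} =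
      XL (insert m L') ⊓ LinearMap.ker g := by
  apply le_antisymm
  · refine sup_le (inf_le_inf (XL_mono (Finset.subset_insert m L')) le_rfl) ?_
    rw [Submodule.span_le, Set.singleton_subset_iff]
    refine ⟨single_mem_XL (Finset.mem_insert_self m L'), ?_⟩
    have h0 : (Pi.single m 1 : Fin r → ℝ) =
        fun t => (0 : Fin r → ℝ) t + (if t = m then 1 else 0) := by
      funext t
      simp [Pi.single_apply]
    show g _ = 0
    rw [h0, hg, map_zero]
  · rintro x ⟨hX, hker⟩
    rw [Submodule.mem_sup]
    refine ⟨fun t => x t + (if t = m then -(x m) else 0), ⟨?_, ?_⟩,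
      x m • (Pi.single m 1 : Fin r → ℝ),
      Submodule.smul_mem _ _ (Submodule.mem_span_singleton_self _), ?_⟩
    · intro t ht
      by_cases htm : t = m
      · subst htm; simp
      · simp only [htm, if_false, add_zero]
        exact hX t (by simp [htm, ht])
    · show g _ = 0
      rw [hg]
      exact hker
    · funext t
      by_cases htm : t = m
      · subst htm; simp
      · simp [htm, Pi.single_apply]

lemma sup_single_pair (hm : m ∉ L') {i j : Fin r} (hi : i ∈ L') (hj : j ∈ L') (s : ℝ) :
    pairHyp L' i j s ⊔ Submodule.span ℝ {(Pi.single m 1 : Fin r → ℝ)} =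
      pairHyp (insert m L') i j s := by
  have him : i ≠ m := fun h => hm (h ▸ hi)
  have hjm : j ≠ m := fun h => hm (h ▸ hj)
  rw [pairHyp_def, pairHyp_def]
  exact sup_single_ker hm _ (hg_pair him hjm s)

lemma sup_single_zero (hm : m ∉ L') {i : Fin r} (hi : i ∈ L') :
    zeroHyp L' i ⊔ Submodule.span ℝ {(Pi.single m 1 : Fin r → ℝ)} =
      zeroHyp (insert m L') i := by
  have him : i ≠ m := fun h => hm (h ▸ hi)
  rw [zeroHyp_def, zeroHyp_def]
  exact sup_single_ker hm _ (hg_zero him)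

lemma image_sup_single (hm : m ∉ L') (hZ : Z ⊆ L') :
    (FullA L' Z L').image
        (fun K => K ⊔ Submodule.span ℝ {(Pi.single m 1 : Fin r → ℝ)}) =
      FullA L' Z (insert m L') := by
  ext K
  simp only [Finset.mem_image]
  constructor
  · rintro ⟨K₀, hK₀, rfl⟩
    rw [mem_FullA] at hK₀
    rw [mem_FullA]
    rcases hK₀ with ⟨i, j, hi, hj, hij, (rfl | rfl)⟩ | ⟨i, hi, rfl⟩
    · rw [sup_single_pair hm hi hj]
      exact Or.inl ⟨i, j, hi, hj, hij, Or.inl rfl⟩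
    · rw [sup_single_pair hm hi hj]
      exact Or.inl ⟨i, j, hi, hj, hij, Or.inr rfl⟩
    · rw [sup_single_zero hm (hZ hi)]
      exact Or.inr ⟨i, hi, rfl⟩
  · intro hK
    rw [mem_FullA] at hK
    rcases hK with ⟨i, j, hi, hj, hij, (rfl | rfl)⟩ | ⟨i, hi, rfl⟩
    · exact ⟨pairHyp L' i j 1, mem_FullA.2 (Or.inl ⟨i, j, hi, hj, hij, Or.inl rfl⟩),
        sup_single_pair hm hi hj 1⟩
    · exact ⟨pairHyp L' i j (-1), mem_FullA.2 (Or.inl ⟨i, j, hi, hj, hij, Or.inr rfl⟩),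
        sup_single_pair hm hi hj (-1)⟩
    · exact ⟨zeroHyp L' i, mem_FullA.2 (Or.inr ⟨i, hi, rfl⟩), sup_single_zero hm (hZ hi)⟩

lemma phase_embed (hm : m ∉ L') (hZ : Z ⊆ L') {E : Multiset ℕ}
    (h : IndFree (XL L') (FullA L' Z L') E) :
    IndFree (XL (insert m L')) (FullA L' Z (insert m L')) (0 ::ₘ E) := by
  have hne : (Pi.single m 1 : Fin r → ℝ) ≠ 0 := by
    intro hc
    have := congrFun hc m
    simp [Pi.single_eq_same] at this
  have hV : finrank ℝ (Submodule.span ℝ {(Pi.single m 1 : Fin r → ℝ)}) = 1 :=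
    finrank_span_singleton hne
  have hmain := IndFree.embed hV h (span_single_inf_XL hm)
  rwa [image_sup_single hm hZ, ← XL_insert hm] at hmain

/- ## Expo arithmetic -/

lemma Expo_zero : Expo 0 0 = 0 := rfl

lemma singleton_add' (M : Multiset ℕ) (c : ℕ) : M + {c} = c ::ₘ M := by
  rw [add_comm, Multiset.singleton_add]

lemma Expo_pos (n z : ℕ) (hn : n ≠ 0) :
    Expo n z = (n - 1 + z) ::ₘ ((Multiset.range (n - 1)).map fun i => 2 * i + 1) := by
  rw [Expo, if_neg hn, singleton_add']

/-- A4 -/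
lemma Expo_swap {n z : ℕ} (hn : 1 ≤ n) :
    (n + z) ::ₘ Expo n z = (n + z - 1) ::ₘ Expo n (z + 1) := by
  obtain ⟨k, rfl⟩ := Nat.exists_eq_add_of_le hn
  rw [Expo_pos _ _ (by omega), Expo_pos _ _ (by omega)]
  have h1 : 1 + k - 1 + z = k + z := by omega
  have h2 : 1 + k + z - 1 = k + z := by omega
  have h3 : 1 + k - 1 + (z + 1) = 1 + k + z := by omega
  rw [h1, h2, h3, Multiset.cons_swap]

/-- A5 -/
lemma Expo_step {k z : ℕ} :
    Expo (k + 2) z = (2 * k + 1) ::ₘ Expo (k + 1) (z + 1) := by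
  rw [Expo_pos _ _ (by omega), Expo_pos _ _ (by omega)]
  have h1 : k + 2 - 1 = k + 1 := by omega
  have h2 : k + 1 - 1 = k := by omega
  have h3 : k + (z + 1) = k + 1 + z := by omega
  rw [h1, h2, h3, Multiset.range_succ, Multiset.map_cons, Multiset.cons_swap]

lemma cons_cons_eq {a b a' b' : ℕ} {M : Multiset ℕ} (h1 : a = a') (h2 : b = b') :
    a ::ₘ b ::ₘ M = a' ::ₘ b' ::ₘ M := by rw [h1, h2]

/-- A6 -/
lemma Expo_step3 {n : ℕ} : (2 * n) ::ₘ Expo n n = Expo (n + 1) n := by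
  cases n with
  | zero => rfl
  | succ k =>
      rw [Expo_pos (k+1) (k+1) (Nat.succ_ne_zero k), Expo_pos (k+1+1) (k+1) (Nat.succ_ne_zero _)]
      simp only [Nat.add_sub_cancel]
      rw [Multiset.range_succ, Multiset.map_cons]
      exact cons_cons_eq (by omega) (by omega)

/-- A7 -/
lemma Expo_zstep {n z : ℕ} : Expo (n + 1) z = (n + z) ::ₘ Expo n n := by
  cases n with
  | zero =>
      rw [Expo_pos 1 z one_ne_zero, Expo_zero]
      simp
  | succ k =>
      rw [Expo_pos (k+1+1) z (Nat.succ_ne_zero _), Expo_pos (k+1) (k+1) (Nat.succ_ne_zero k)]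
      simp only [Nat.add_sub_cancel]
      rw [Multiset.range_succ, Multiset.map_cons]
      exact cons_cons_eq (by omega) (by omega)

end DrkAux
end CHUNK9

section CHUNK10
set_option maxHeartbeats 1000000
set_option synthInstance.maxHeartbeats 200000
namespace DrkAux
variable {r : ℕ} {L' Z : Finset (Fin r)} {m : Fin r}

lemma phase_plus (hm : m ∉ L') (hZ : Z ⊆ L')
    (IH : ∀ Z₀ ⊆ L', IndFree (XL L') (FullA L' Z₀ L') (Expo L'.card Z₀.card)) :
    ∀ T, T ⊆ L' → IndFree (XL (insert m L')) (PartA L' Z T ∅ m)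
      (T.card ::ₘ Expo L'.card Z.card) := by
  intro T
  induction T using Finset.induction_on with
  | empty =>
      intro _
      rw [PartA_empty, Finset.card_empty]
      exact phase_embed hm hZ (IH Z hZ)
  | @insert a T haT ihT =>
      intro hsub
      have ha : a ∈ L' := hsub (Finset.mem_insert_self a T)
      have hT : T ⊆ L' := fun x hx => hsub (Finset.mem_insert_of_mem hx)
      have ham : a ≠ m := fun h => hm (h ▸ ha)
      rw [PartA_insert_T haT, Finset.card_insert_of_notMem haT]
      refine IndFree.add _ _ (pairHyp (insert m L') a m 1) (Expo L'.card Z.card) T.card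
        (Finset.mem_insert_self _ _) ?_ ?_ ?_
      · intro K hK
        rw [← PartA_insert_T haT] at hK
        exact hyp_all_PartA hm hZ hsub (Finset.empty_subset L') K hK
      · rw [Finset.erase_insert (plus_not_mem hm hZ hT ha haT)]
        exact ihT hT
      · unfold restrictArr
        rw [Finset.erase_insert (plus_not_mem hm hZ hT ha haT),
          restrict_plus hm ha ham hZ hT haT]
        have hmap := IndFree.map_equiv (shear a m ham 1) (IH Z hZ)
        rwa [map_shear_XL ha hm ham (by norm_num)] at hmap

lemma phase_minus1 (hm : m ∉ L') (hZ : Z ⊆ L')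
    (IH : ∀ Z₀ ⊆ L', IndFree (XL L') (FullA L' Z₀ L') (Expo L'.card Z₀.card)) :
    ∀ S, S ⊆ Z → IndFree (XL (insert m L')) (PartA L' Z L' S m)
      ((L'.card + S.card) ::ₘ Expo L'.card Z.card) := by
  intro S
  induction S using Finset.induction_on with
  | empty =>
      intro _
      rw [Finset.card_empty, Nat.add_zero]
      exact phase_plus hm hZ IH L' le_rfl
  | @insert a S haS ihS =>
      intro hsub
      have haZ : a ∈ Z := hsub (Finset.mem_insert_self a S)
      have hS : S ⊆ Z := fun x hx => hsub (Finset.mem_insert_of_mem hx)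
      have hSL : S ⊆ L' := fun x hx => hZ (hS hx)
      have ha : a ∈ L' := hZ haZ
      have ham : a ≠ m := fun h => hm (h ▸ ha)
      rw [PartA_insert_S haS, Finset.card_insert_of_notMem haS]
      refine IndFree.add _ _ (pairHyp (insert m L') a m (-1)) (Expo L'.card Z.card)
        (L'.card + S.card) (Finset.mem_insert_self _ _) ?_ ?_ ?_
      · intro K hK
        rw [← PartA_insert_S haS] at hK
        exact hyp_all_PartA hm hZ le_rfl (fun x hx => hZ (hsub hx)) K hK
      · rw [Finset.erase_insert (minus_not_mem hm hZ hSL ha haS)]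
        exact ihS hS
      · unfold restrictArr
        rw [Finset.erase_insert (minus_not_mem hm hZ hSL ha haS),
          restrict_minus hm ha ham hZ hSL haS, Finset.insert_eq_self.2 haZ]
        have hmap := IndFree.map_equiv (shear a m ham (-1)) (IH Z hZ)
        rwa [map_shear_XL ha hm ham (by norm_num)] at hmap

lemma phase_minus2 (hm : m ∉ L') (hZ : Z ⊆ L')
    (IH : ∀ Z₀ ⊆ L', IndFree (XL L') (FullA L' Z₀ L') (Expo L'.card Z₀.card)) :
    ∀ S₂, S₂ ⊆ L' \ Z → S₂.Nonempty →
      IndFree (XL (insert m L')) (PartA L' Z L' (Z ∪ S₂) m)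
        ((L'.card + Z.card + S₂.card - 1) ::ₘ Expo L'.card (Z.card + 1)) := by
  intro S₂
  induction S₂ using Finset.induction_on with
  | empty => intro _ h; exact absurd h (by simp)
  | @insert a S₂ haS ihS =>
      intro hsub _
      have haD : a ∈ L' \ Z := hsub (Finset.mem_insert_self a S₂)
      rw [Finset.mem_sdiff] at haD
      obtain ⟨ha, haZ⟩ := haD
      have hS2 : S₂ ⊆ L' \ Z := fun x hx => hsub (Finset.mem_insert_of_mem hx)
      have ham : a ≠ m := fun h => hm (h ▸ ha)
      have hZS : Z ∪ S₂ ⊆ L' := by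
        intro x hx
        rcases Finset.mem_union.1 hx with h | h
        · exact hZ h
        · exact (Finset.mem_sdiff.1 (hS2 h)).1
      have haZS : a ∉ Z ∪ S₂ := by
        rw [Finset.mem_union]
        rintro (h | h)
        · exact haZ h
        · exact haS h
      have hL1 : 1 ≤ L'.card := Finset.card_pos.2 ⟨a, ha⟩
      rw [Finset.union_insert, PartA_insert_S haZS, Finset.card_insert_of_notMem haS]
      have hz1 : L'.card + Z.card + (S₂.card + 1) - 1 =
          (L'.card + Z.card + S₂.card - 1) + 1 := by omega
      rw [hz1]
      refine IndFree.add _ _ (pairHyp (insert m L') a m (-1)) (Expo L'.card (Z.card + 1))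
        (L'.card + Z.card + S₂.card - 1) (Finset.mem_insert_self _ _) ?_ ?_ ?_
      · intro K hK
        rw [← PartA_insert_S haZS] at hK
        refine hyp_all_PartA hm hZ le_rfl ?_ K hK
        intro x hx
        rcases Finset.mem_insert.1 hx with rfl | hx
        · exact ha
        · exact hZS hx
      · rw [Finset.erase_insert (minus_not_mem hm hZ hZS ha haZS)]
        rcases Finset.eq_empty_or_nonempty S₂ with rfl | hne
        · rw [Finset.union_empty]
          have hbase := phase_minus1 hm hZ IH Z le_rfl
          have heq : (L'.card + Z.card) ::ₘ Expo L'.card Z.card =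
              (L'.card + Z.card + (∅ : Finset (Fin r)).card - 1) ::ₘ Expo L'.card (Z.card + 1) := by
            rw [Finset.card_empty, Nat.add_zero]
            exact Expo_swap hL1
          rwa [heq] at hbase
        · exact ihS hS2 hne
      · unfold restrictArr
        rw [Finset.erase_insert (minus_not_mem hm hZ hZS ha haZS),
          restrict_minus hm ha ham hZ hZS haZS]
        have hsubZ : insert a Z ⊆ L' := by
          intro x hx
          rcases Finset.mem_insert.1 hx with rfl | hx
          · exact ha
          · exact hZ hx
        have hmap := IndFree.map_equiv (shear a m ham (-1)) (IH (insert a Z) hsubZ)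
        rwa [map_shear_XL ha hm ham (by norm_num),
          Finset.card_insert_of_notMem haZ] at hmap

end DrkAux
end CHUNK10

section CHUNK11
set_option maxHeartbeats 1000000
set_option synthInstance.maxHeartbeats 200000
namespace DrkAux
variable {r : ℕ}

lemma mainAux : ∀ (n : ℕ) (L : Finset (Fin r)), L.card = n → ∀ Z, Z ⊆ L →
    IndFree (XL L) (FullA L Z L) (Expo n Z.card) := by
  intro n
  induction n with
  | zero =>
      intro L hL Z hZ
      rw [Finset.card_eq_zero] at hL
      subst hL
      have hZe : Z = ∅ := Finset.subset_empty.1 hZ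
      subst hZe
      have h := IndFree.empty (XL (∅ : Finset (Fin r)))
      rw [finrank_XL] at h
      simpa [FullA, Expo] using h
  | succ n ihn =>
      intro L hL Z hZ
      obtain ⟨m, hmL⟩ : L.Nonempty := Finset.card_pos.1 (by omega)
      have hm : m ∉ L.erase m := Finset.notMem_erase m L
      have hL' : L = insert m (L.erase m) := (Finset.insert_erase hmL).symm
      have hcard : (L.erase m).card = n := by
        rw [Finset.card_erase_of_mem hmL, hL]
        omega
      have IH : ∀ Z₀ ⊆ L.erase m, IndFree (XL (L.erase m)) (FullA (L.erase m) Z₀ (L.erase m))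
          (Expo (L.erase m).card Z₀.card) := by
        intro Z₀ h
        rw [hcard]
        exact ihn (L.erase m) hcard Z₀ h
      have hZ'sub : Z.erase m ⊆ L.erase m := Finset.erase_subset_erase m hZ
      have hFullZ' : IndFree (XL L) (FullA L (Z.erase m) L)
          (Expo (n + 1) (Z.erase m).card) := by
        rcases eq_or_ne (Z.erase m) (L.erase m) with heq | hne
        · have hzc : (Z.erase m).card = n := by rw [heq, hcard]
          have h1 := phase_minus1 hm hZ'sub IH (L.erase m) (le_of_eq heq.symm)
          rw [PartA_full hm, ← hL', hcard, hzc,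
            show n + n = 2 * n from by omega, Expo_step3] at h1
          rwa [hzc]
        · have hne2 : ((L.erase m) \ (Z.erase m)).Nonempty := by
            rw [Finset.sdiff_nonempty]
            intro hcon
            exact hne (le_antisymm hZ'sub hcon)
          have h1 := phase_minus2 hm hZ'sub IH ((L.erase m) \ (Z.erase m)) le_rfl hne2
          rw [Finset.union_sdiff_of_subset hZ'sub, PartA_full hm, ← hL'] at h1
          have hsd : ((L.erase m) \ (Z.erase m)).card = n - (Z.erase m).card := by
            rw [Finset.card_sdiff_of_subset hZ'sub, hcard]
          have hn1 : 1 ≤ n := by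
            obtain ⟨x, hx⟩ := hne2
            have hx1 : x ∈ L.erase m := (Finset.mem_sdiff.1 hx).1
            have := Finset.card_pos.2 ⟨x, hx1⟩
            omega
          have hzn : (Z.erase m).card ≤ n := by
            rw [← hcard]
            exact Finset.card_le_card hZ'sub
          obtain ⟨k, hk⟩ : ∃ k, n = k + 1 := ⟨n - 1, by omega⟩
          rw [hcard, hsd] at h1
          have hhead : n + (Z.erase m).card + (n - (Z.erase m).card) - 1 = 2 * k + 1 := by
            omega
          rw [hhead, hk] at h1
          rw [← Expo_step] at h1
          rw [hk]
          exact h1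
      by_cases hmZ : m ∈ Z
      · have hZm : Z = insert m (Z.erase m) := (Finset.insert_erase hmZ).symm
        have hcardZ : Z.card = (Z.erase m).card + 1 := by
          rw [Finset.card_erase_of_mem hmZ]
          have := Finset.card_pos.2 ⟨m, hmZ⟩
          omega
        rw [hcardZ, Expo_zstep]
        nth_rewrite 1 [hZm]
        rw [FullA_insert_zero, hL']
        refine IndFree.add _ _ (zeroHyp (insert m (L.erase m)) m) (Expo n n)
          (n + (Z.erase m).card) (Finset.mem_insert_self _ _) ?_ ?_ ?_
        · intro K hK
          rw [← FullA_insert_zero, ← hZm, ← hL'] at hK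
          rw [← hL']
          exact hyp_all_FullA le_rfl hZ K hK
        · rw [Finset.erase_insert (zero_not_mem hm hZ'sub)]
          have h2 := hFullZ'
          rw [Expo_zstep, hL'] at h2
          exact h2
        · unfold restrictArr
          rw [Finset.erase_insert (zero_not_mem hm hZ'sub)]
          have hZ'sub2 : Z.erase m ⊆ L.erase m := hZ'sub
          rw [restrict_zero_lem hm hZ'sub,
            zeroHyp_insert_eq_XL hm]
          have h3 := IH (L.erase m) le_rfl
          rwa [hcard] at h3
      · rw [Finset.erase_eq_of_notMem hmZ] at hFullZ'
        exact hFullZ'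

end DrkAux
end CHUNK11

section FINAL
set_option maxHeartbeats 1000000
set_option synthInstance.maxHeartbeats 200000
namespace DrkAux
variable {r : ℕ}

lemma XL_univ : XL (Finset.univ : Finset (Fin r)) = ⊤ := by
  rw [eq_top_iff]
  intro x _ i hi
  exact absurd (Finset.mem_univ i) hi

lemma pairHyp_univ_plus (i j : Fin r) :
    pairHyp Finset.univ i j 1 =
      LinearMap.ker ((LinearMap.proj i : (Fin r → ℝ) →ₗ[ℝ] ℝ) - LinearMap.proj j) := by
  rw [pairHyp_def, XL_univ, top_inf_eq]
  congr 1
  unfold gP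
  rw [one_smul]

lemma pairHyp_univ_minus (i j : Fin r) :
    pairHyp Finset.univ i j (-1) =
      LinearMap.ker ((LinearMap.proj i : (Fin r → ℝ) →ₗ[ℝ] ℝ) + LinearMap.proj j) := by
  rw [pairHyp_def, XL_univ, top_inf_eq]
  congr 1
  unfold gP
  ext x; simp

lemma zeroHyp_univ (i : Fin r) :
    zeroHyp Finset.univ i = LinearMap.ker (LinearMap.proj i : (Fin r → ℝ) →ₗ[ℝ] ℝ) := by
  rw [zeroHyp_def, XL_univ, top_inf_eq]

end DrkAux
end FINAL


/-- For `0 ≤ k ≤ r`, the arrangement `D_r^k` in `ℝ^r`, consisting of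
the hyperplanes `x_i = ±x_j` (`1 ≤ i < j ≤ r`) and `x_i = 0` (`1 ≤ i ≤ k`) (defining
polynomial `x₁⋯x_k ∏_{i<j}(x_i−x_j)(x_i+x_j)`), is inductively free. -/
theorem Drk_inductively_free (r k : ℕ) (hk : k ≤ r)
    (A : Finset (Submodule ℝ (Fin r → ℝ)))
    (hA : ∀ H, H ∈ A ↔
      (∃ i j : Fin r, i < j ∧
        (H = LinearMap.ker ((LinearMap.proj i : (Fin r → ℝ) →ₗ[ℝ] ℝ) - LinearMap.proj j) ∨
         H = LinearMap.ker ((LinearMap.proj i : (Fin r → ℝ) →ₗ[ℝ] ℝ) + LinearMap.proj j))) ∨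
      (∃ i : Fin r, (i : ℕ) < k ∧
        H = LinearMap.ker (LinearMap.proj i : (Fin r → ℝ) →ₗ[ℝ] ℝ))) :
    ∃ e : Multiset ℕ, IndFree ⊤ A e := by
  classical
  set Zk : Finset (Fin r) := Finset.univ.filter (fun i : Fin r => (i : ℕ) < k) with hZk
  have hmemZk : ∀ i : Fin r, i ∈ Zk ↔ (i : ℕ) < k := by
    intro i
    simp [hZk]
  have hAeq : A = DrkAux.FullA Finset.univ Zk Finset.univ := by
    ext H
    rw [hA H, DrkAux.mem_FullA]
    constructor
    · rintro (⟨i, j, hij, (rfl | rfl)⟩ | ⟨i, hik, rfl⟩)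
      · exact Or.inl ⟨i, j, Finset.mem_univ i, Finset.mem_univ j, ne_of_lt hij,
          Or.inl (DrkAux.pairHyp_univ_plus i j).symm⟩
      · exact Or.inl ⟨i, j, Finset.mem_univ i, Finset.mem_univ j, ne_of_lt hij,
          Or.inr (DrkAux.pairHyp_univ_minus i j).symm⟩
      · exact Or.inr ⟨i, (hmemZk i).2 hik, (DrkAux.zeroHyp_univ i).symm⟩
    · rintro (⟨i, j, -, -, hij, (rfl | rfl)⟩ | ⟨i, hik, rfl⟩)
      · rcases lt_or_gt_of_ne hij with h | h
        · exact Or.inl ⟨i, j, h, Or.inl (DrkAux.pairHyp_univ_plus i j)⟩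
        · refine Or.inl ⟨j, i, h, Or.inl ?_⟩
          rw [DrkAux.pairHyp_comm (by norm_num)]
          exact DrkAux.pairHyp_univ_plus j i
      · rcases lt_or_gt_of_ne hij with h | h
        · exact Or.inl ⟨i, j, h, Or.inr (DrkAux.pairHyp_univ_minus i j)⟩
        · refine Or.inl ⟨j, i, h, Or.inr ?_⟩
          rw [DrkAux.pairHyp_comm (by norm_num)]
          exact DrkAux.pairHyp_univ_minus j i
      · exact Or.inr ⟨i, (hmemZk i).1 hik, DrkAux.zeroHyp_univ i⟩
  refine ⟨DrkAux.Expo r Zk.card, ?_⟩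
  rw [hAeq, ← DrkAux.XL_univ]
  exact DrkAux.mainAux r Finset.univ (by simp) Zk (Finset.subset_univ Zk)
end
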